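/- arXiv:1406.0762 — 3 statements merged into one kernel-verified Lean document; each statement's English description precedes it below -/
import Mathlib

section
/- For the product Gegenbauer weight, define Q_k^n(x,y) = q_{n-k}(u_α;x) q_k(u_β;y) where q_m(u_γ;x) = p_m(u_γ;x) + m b_{m-1}(γ) p_{m-2}(u_γ;x) and b_{m-1}(γ) = -(m-1)/(4(m+γ-1)(m+γ-2)). Then for 1 ≤ k ≤ n-1: ∂_x Q_k^n = (n-k)[P_k^{n-1} + k b_{k-1}(β) P_{k-2}^{n-3}] and ∂_y Q_k^n = k[P_{k-1}^{n-1} + (n-k) b_{n-k-1}(α) P_{k-1}^{n-3}], where P_j^m(x,y) = p_{m-j}(u_α;x) p_j(u_β;y). -/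
open Finset MeasureTheory

/-- The classical Gegenbauer (ultraspherical) polynomial. -/
noncomputable def gegenbauer (α : ℝ) (n : ℕ) (x : ℝ) : ℝ :=
  ∑ k ∈ Finset.range (n / 2 + 1),
    (-1) ^ k * Real.Gamma (((n - k : ℕ) : ℝ) + α) /
      (Real.Gamma α * k.factorial * (n - 2 * k).factorial) * (2 * x) ^ (n - 2 * k)

/-- The monic Gegenbauer polynomial `p_n(u_α;x) = 2^{-n} binom(n+α-1,n)^{-1} C_n^α(x)`. -/
noncomputable def gegMonic (α : ℝ) (n : ℕ) (x : ℝ) : ℝ :=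
  (Real.Gamma α * n.factorial / (2 ^ n * Real.Gamma ((n : ℝ) + α))) * gegenbauer α n x

/-- The coefficient `b_j(α) = -j/(4(j+α)(j+α-1))`, so that
`b_{m-1}(α) = -(m-1)/(4(m+α-1)(m+α-2))`. -/
noncomputable def bcoef (j : ℕ) (α : ℝ) : ℝ :=
  -((j : ℝ) / (4 * ((j : ℝ) + α) * ((j : ℝ) + α - 1)))

/-- `q_m(u_α;x) = p_m(u_α;x) + m·b_{m-1}(α)·p_{m-2}(u_α;x)`. -/
noncomputable def gegQ (α : ℝ) (m : ℕ) (x : ℝ) : ℝ :=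
  gegMonic α m x + m * bcoef (m - 1) α * gegMonic α (m - 2) x

/-- The product monic Gegenbauer polynomials `P_j^m(x,y) = p_{m-j}(u_α;x) p_j(u_β;y)`. -/
noncomputable def gegP (α β : ℝ) (m j : ℕ) (x y : ℝ) : ℝ :=
  gegMonic α (m - j) x * gegMonic β j y

/-- The polynomials `Q_k^n(x,y) = q_{n-k}(u_α;x) q_k(u_β;y)`. -/
noncomputable def gegQ2 (α β : ℝ) (n k : ℕ) (x y : ℝ) : ℝ :=
  gegQ α (n - k) x * gegQ β k y

/-- The normalized gradient bilinear form for the product Gegenbauer weight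
`U_{α,β}(x,y) = (1-x²)^{α-1/2}(1-y²)^{β-1/2}` on `[-1,1]²`; the normalizing constant is
`c_{α,β} = Γ(α+1)Γ(β+1)/(Γ(α+1/2)Γ(β+1/2)Γ(1/2)²)` with `Γ(1/2)² = π`. -/
noncomputable def gegGrad (α β : ℝ) (f g : ℝ → ℝ → ℝ) : ℝ :=
  (Real.Gamma (α + 1) * Real.Gamma (β + 1) /
      (Real.Gamma (α + 1 / 2) * Real.Gamma (β + 1 / 2) * Real.pi)) *
    ∫ p in (Set.Ioc (-1 : ℝ) 1) ×ˢ (Set.Ioc (-1 : ℝ) 1),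
      (deriv (fun t => f t p.2) p.1 * deriv (fun t => g t p.2) p.1 +
        deriv (fun t => f p.1 t) p.2 * deriv (fun t => g p.1 t) p.2) *
      (Real.rpow (1 - p.1 ^ 2) (α - 1 / 2) * Real.rpow (1 - p.2 ^ 2) (β - 1 / 2))

/-- `h_n^γ = 2^{1-2γ-2n} √π n! Γ(γ+1) Γ(n+2γ) / (Γ(γ+1/2) Γ(n+γ) Γ(n+γ+1))`. -/
noncomputable def hGeg (γ : ℝ) (n : ℕ) : ℝ :=
  Real.rpow 2 (1 - 2 * γ - 2 * n) * Real.sqrt Real.pi * n.factorial * Real.Gamma (γ + 1) *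
    Real.Gamma ((n : ℝ) + 2 * γ) /
      (Real.Gamma (γ + 1 / 2) * Real.Gamma ((n : ℝ) + γ) * Real.Gamma ((n : ℝ) + γ + 1))


set_option maxHeartbeats 1000000

section AuxGegQ

lemma hasDerivAt_geg (α : ℝ) (n : ℕ) (x : ℝ) :
    HasDerivAt (fun x => gegenbauer α n x)
      (∑ k ∈ Finset.range (n / 2 + 1),
        (-1) ^ k * Real.Gamma (((n - k : ℕ) : ℝ) + α) /
          (Real.Gamma α * k.factorial * (n - 2 * k).factorial) *
          (((n - 2 * k : ℕ) : ℝ) * (2 * x) ^ (n - 2 * k - 1) * 2)) x := by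
  have h : ∀ k ∈ Finset.range (n / 2 + 1), HasDerivAt (fun x : ℝ =>
      (-1) ^ k * Real.Gamma (((n - k : ℕ) : ℝ) + α) /
        (Real.Gamma α * k.factorial * (n - 2 * k).factorial) * (2 * x) ^ (n - 2 * k))
      ((-1) ^ k * Real.Gamma (((n - k : ℕ) : ℝ) + α) /
          (Real.Gamma α * k.factorial * (n - 2 * k).factorial) *
          (((n - 2 * k : ℕ) : ℝ) * (2 * x) ^ (n - 2 * k - 1) * 2)) x := by
    intro k _
    have h1 : HasDerivAt (fun x : ℝ => 2 * x) 2 x := by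
      simpa using (hasDerivAt_id x).const_mul 2
    exact (h1.pow _).const_mul _
  simpa [gegenbauer] using HasDerivAt.fun_sum h

lemma hasDerivAt_gegMonic (α : ℝ) (n : ℕ) (x : ℝ) :
    HasDerivAt (fun x => gegMonic α n x)
      ((Real.Gamma α * n.factorial / (2 ^ n * Real.Gamma ((n : ℝ) + α))) *
        ∑ k ∈ Finset.range (n / 2 + 1),
        (-1) ^ k * Real.Gamma (((n - k : ℕ) : ℝ) + α) /
          (Real.Gamma α * k.factorial * (n - 2 * k).factorial) *
          (((n - 2 * k : ℕ) : ℝ) * (2 * x) ^ (n - 2 * k - 1) * 2)) x := by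
  simpa [gegMonic] using (hasDerivAt_geg α n x).const_mul
    (Real.Gamma α * n.factorial / (2 ^ n * Real.Gamma ((n : ℝ) + α)))

lemma Gamma_nat_ne (α : ℝ) (hα : -(1/2:ℝ) < α) (hΓ : Real.Gamma α ≠ 0) (j : ℕ) :
    Real.Gamma ((j : ℝ) + α) ≠ 0 := by
  rcases Nat.eq_zero_or_pos j with rfl | hj
  · simpa using hΓ
  · refine (Real.Gamma_pos_of_pos ?_).ne'
    have : (1:ℝ) ≤ (j:ℝ) := by exact_mod_cast hj
    linarith

lemma aux_cancel (a g p f z : ℝ) (ha : a ≠ 0) (hg : g ≠ 0) (hf : f ≠ 0) :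
    a * f / (p * g) * (g / (a * f) * z) = z / p := by
  rcases eq_or_ne p 0 with rfl | hp
  · simp
  · field_simp

lemma step (α : ℝ) (hα : -(1/2:ℝ) < α) (hΓ : Real.Gamma α ≠ 0) (x : ℝ) (k e : ℕ) :
    (Real.Gamma α * ((2*k+1+e+2).factorial : ℝ) / (2 ^ (2*k+1+e+2) * Real.Gamma ((2*k+1+e+2 : ℕ) + α))) *
      ((-1) ^ (k+1) * Real.Gamma (((2*k+1+e+2 - (k+1) : ℕ) : ℝ) + α) /
        (Real.Gamma α * ((k+1).factorial : ℝ) * ((2*k+1+e+2 - 2*(k+1)).factorial : ℝ)) *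
        (((2*k+1+e+2 - 2*(k+1) : ℕ) : ℝ) * (2*x) ^ (2*k+1+e+2 - 2*(k+1) - 1) * 2))
    + (((2*k+1+e+2 : ℕ) : ℝ) * bcoef (2*k+1+e+1) α) *
      ((Real.Gamma α * ((2*k+1+e).factorial : ℝ) / (2 ^ (2*k+1+e) * Real.Gamma ((2*k+1+e : ℕ) + α))) *
        ((-1) ^ k * Real.Gamma (((2*k+1+e - k : ℕ) : ℝ) + α) /
          (Real.Gamma α * (k.factorial : ℝ) * ((2*k+1+e - 2*k).factorial : ℝ)) *
          (((2*k+1+e - 2*k : ℕ) : ℝ) * (2*x) ^ (2*k+1+e - 2*k - 1) * 2)))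
    = ((2*k+1+e+2 : ℕ) : ℝ) *
      ((Real.Gamma α * ((2*k+1+e+1).factorial : ℝ) / (2 ^ (2*k+1+e+1) * Real.Gamma ((2*k+1+e+1 : ℕ) + α))) *
        ((-1) ^ (k+1) * Real.Gamma (((2*k+1+e+1 - (k+1) : ℕ) : ℝ) + α) /
          (Real.Gamma α * ((k+1).factorial : ℝ) * ((2*k+1+e+1 - 2*(k+1)).factorial : ℝ)) *
          (2*x) ^ (2*k+1+e+1 - 2*(k+1)))) := by
  -- normalize natural-number index arithmetic
  rw [show 2*k+1+e+2 - (k+1) = k+e+2 by omega, show 2*k+1+e+2 - 2*(k+1) = e+1 by omega,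
      show e+1-1 = e by omega, show 2*k+1+e - k = k+e+1 by omega,
      show 2*k+1+e - 2*k = e+1 by omega, show 2*k+1+e+1 - (k+1) = k+e+1 by omega,
      show 2*k+1+e+1 - 2*(k+1) = e by omega, show e+1-1 = e by omega]
  -- Gamma recurrences
  have hA : (0:ℝ) < 2*(k:ℝ)+1+(e:ℝ)+α := by
    nlinarith [(Nat.cast_nonneg k : (0:ℝ) ≤ k), (Nat.cast_nonneg e : (0:ℝ) ≤ e)]
  have hB : (0:ℝ) < (k:ℝ)+(e:ℝ)+1+α := by
    nlinarith [(Nat.cast_nonneg k : (0:ℝ) ≤ k), (Nat.cast_nonneg e : (0:ℝ) ≤ e)]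
  have g2 : Real.Gamma (((2*k+1+e+1 : ℕ) : ℝ) + α)
      = (2*(k:ℝ)+1+(e:ℝ)+α) * Real.Gamma (((2*k+1+e : ℕ) : ℝ) + α) := by
    rw [show (((2*k+1+e+1 : ℕ) : ℝ) + α) = (((2*k+1+e : ℕ) : ℝ) + α) + 1 by push_cast; ring,
        Real.Gamma_add_one (by push_cast; linarith)]
    push_cast; ring
  have g3 : Real.Gamma (((2*k+1+e+2 : ℕ) : ℝ) + α)
      = (2*(k:ℝ)+1+(e:ℝ)+α+1) * ((2*(k:ℝ)+1+(e:ℝ)+α) * Real.Gamma (((2*k+1+e : ℕ) : ℝ) + α)) := by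
    rw [show (((2*k+1+e+2 : ℕ) : ℝ) + α) = ((((2*k+1+e : ℕ) : ℝ) + α) + 1) + 1 by push_cast; ring,
        Real.Gamma_add_one (by push_cast; linarith),
        Real.Gamma_add_one (by push_cast; linarith)]
    push_cast; ring
  have gH : Real.Gamma (((k+e+2 : ℕ) : ℝ) + α)
      = ((k:ℝ)+(e:ℝ)+1+α) * Real.Gamma (((k+e+1 : ℕ) : ℝ) + α) := by
    rw [show (((k+e+2 : ℕ) : ℝ) + α) = (((k+e+1 : ℕ) : ℝ) + α) + 1 by push_cast; ring,
        Real.Gamma_add_one (by push_cast; linarith)]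
    push_cast; ring
  -- factorial recurrences
  have f3 : (((2*k+1+e+2).factorial : ℕ) : ℝ)
      = (2*(k:ℝ)+1+(e:ℝ)+2) * ((2*(k:ℝ)+1+(e:ℝ)+1) * ((2*k+1+e).factorial : ℝ)) := by
    rw [show 2*k+1+e+2 = (2*k+1+e+1)+1 by omega, Nat.factorial_succ,
        show 2*k+1+e+1 = (2*k+1+e)+1 by omega, Nat.factorial_succ]
    push_cast; ring
  have f2 : (((2*k+1+e+1).factorial : ℕ) : ℝ) = (2*(k:ℝ)+1+(e:ℝ)+1) * ((2*k+1+e).factorial : ℝ) := by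
    rw [show 2*k+1+e+1 = (2*k+1+e)+1 by omega, Nat.factorial_succ]; push_cast; ring
  have fk : (((k+1).factorial : ℕ) : ℝ) = ((k:ℝ)+1) * (k.factorial : ℝ) := by
    rw [Nat.factorial_succ]; push_cast; ring
  have fe : (((e+1).factorial : ℕ) : ℝ) = ((e:ℝ)+1) * (e.factorial : ℝ) := by
    rw [Nat.factorial_succ]; push_cast; ring
  have hbc : bcoef (2*k+1+e+1) α
      = -((2*(k:ℝ)+1+(e:ℝ)+1) / (4 * (2*(k:ℝ)+1+(e:ℝ)+α+1) * (2*(k:ℝ)+1+(e:ℝ)+α))) := by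
    unfold bcoef; push_cast; ring_nf
  have hG : Real.Gamma (((2*k+1+e : ℕ) : ℝ) + α) ≠ 0 := by
    refine (Real.Gamma_pos_of_pos ?_).ne'
    push_cast; linarith
  have hkf : ((k.factorial : ℕ) : ℝ) ≠ 0 := by positivity
  have hef : ((e.factorial : ℕ) : ℝ) ≠ 0 := by positivity
  have hA1 : (2*(k:ℝ)+1+(e:ℝ)+α+1) ≠ 0 := by linarith
  have hk1 : ((k:ℝ)+1) ≠ 0 := by positivity
  have he1 : ((e:ℝ)+1) ≠ 0 := by positivity
  have p2 : (2:ℝ)^(2*k+1+e+2) = 2^(2*k+1+e)*4 := by rw [pow_add]; norm_num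
  have p1 : (2:ℝ)^(2*k+1+e+1) = 2^(2*k+1+e)*2 := by rw [pow_add]; norm_num
  have c2 : ((2*k+1+e+2 : ℕ):ℝ) = 2*(k:ℝ)+(e:ℝ)+3 := by push_cast; ring
  have ce : ((e+1 : ℕ):ℝ) = (e:ℝ)+1 := by push_cast; ring
  rw [g2, g3, gH, f3, f2, fk, fe, hbc, p2, p1, c2, ce, pow_succ (-1:ℝ) k]
  have h2p : ((2:ℝ)^(2*k+1+e)) ≠ 0 := by positivity
  set s := ((-1:ℝ))^k with hs
  set G := Real.Gamma (((2*k+1+e : ℕ) : ℝ) + α) with hGdef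
  set H := Real.Gamma (((k+e+1 : ℕ) : ℝ) + α) with hHdef
  set P := ((2:ℝ)^(2*k+1+e)) with hP
  set F := (((2*k+1+e).factorial : ℕ) : ℝ) with hF
  have hFne : F ≠ 0 := by rw [hF]; positivity
  field_simp
  ring

lemma sum_helper (N2 N0 N : ℕ) (f2 f0 f1 : ℕ → ℝ) (c2 c0 c1 d1 C : ℝ)
    (hN2 : N + 1 ≤ N2) (hN0 : N ≤ N0)
    (h2 : ∀ K, N + 1 ≤ K → f2 K = 0)
    (h0 : ∀ K, N ≤ K → f0 K = 0)
    (key : ∀ K, K < N → c2 * f2 (K+1) + C * (c0 * f0 K) = c1 * (d1 * f1 (K+1)))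
    (key0 : c2 * f2 0 = c1 * (d1 * f1 0)) :
    c2 * (∑ k ∈ Finset.range N2, f2 k) + C * (c0 * ∑ k ∈ Finset.range N0, f0 k)
      = c1 * (d1 * ∑ k ∈ Finset.range (N+1), f1 k) := by
  have e2 : ∑ k ∈ Finset.range N2, f2 k = ∑ k ∈ Finset.range (N+1), f2 k :=
    (Finset.sum_subset (Finset.range_subset_range.mpr hN2)
      (fun K _ hK => h2 K (by simpa using hK))).symm
  have e0 : ∑ k ∈ Finset.range N0, f0 k = ∑ k ∈ Finset.range N, f0 k :=
    (Finset.sum_subset (Finset.range_subset_range.mpr hN0)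
      (fun K _ hK => h0 K (by simpa using hK))).symm
  rw [e2, e0, Finset.sum_range_succ' f2 N, Finset.sum_range_succ' f1 N]
  calc c2 * ((∑ k ∈ Finset.range N, f2 (k+1)) + f2 0) + C * (c0 * ∑ k ∈ Finset.range N, f0 k)
      = ((∑ k ∈ Finset.range N, c2 * f2 (k+1)) + (∑ k ∈ Finset.range N, C * (c0 * f0 k))) + c2 * f2 0 := by
        simp only [← Finset.mul_sum]; ring
    _ = (∑ k ∈ Finset.range N, (c2 * f2 (k+1) + C * (c0 * f0 k))) + c2 * f2 0 := by
        rw [Finset.sum_add_distrib]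
    _ = (∑ k ∈ Finset.range N, c1 * (d1 * f1 (k+1))) + c1 * (d1 * f1 0) := by
        rw [Finset.sum_congr rfl (fun K hK => key K (Finset.mem_range.mp hK)), key0]
    _ = c1 * (d1 * ((∑ k ∈ Finset.range N, f1 (k+1)) + f1 0)) := by
        simp only [← Finset.mul_sum]; ring

lemma qval (α : ℝ) (hα : -(1/2:ℝ) < α) (m : ℕ) (x : ℝ) :
    (Real.Gamma α * (m.factorial : ℝ) / (2 ^ m * Real.Gamma ((m : ℝ) + α))) *
      (∑ k ∈ Finset.range (m / 2 + 1), (-1) ^ k * Real.Gamma (((m - k : ℕ) : ℝ) + α) /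
          (Real.Gamma α * (k.factorial : ℝ) * ((m - 2 * k).factorial : ℝ)) *
          (((m - 2 * k : ℕ) : ℝ) * (2 * x) ^ (m - 2 * k - 1) * 2))
    + ((m : ℝ) * bcoef (m - 1) α) *
      ((Real.Gamma α * ((m-2).factorial : ℝ) / (2 ^ (m-2) * Real.Gamma (((m-2 : ℕ) : ℝ) + α))) *
        (∑ k ∈ Finset.range ((m-2) / 2 + 1), (-1) ^ k * Real.Gamma ((((m-2) - k : ℕ) : ℝ) + α) /
          (Real.Gamma α * (k.factorial : ℝ) * (((m-2) - 2 * k).factorial : ℝ)) *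
          ((((m-2) - 2 * k : ℕ) : ℝ) * (2 * x) ^ ((m-2) - 2 * k - 1) * 2)))
    = (m : ℝ) * gegMonic α (m - 1) x := by
  by_cases hΓ : Real.Gamma α = 0
  · simp [hΓ, gegMonic]
  match m with
  | 0 => norm_num [Finset.sum_range_one]
  | 1 =>
    have h1 : Real.Gamma (1 + α) ≠ 0 := by
      refine (Real.Gamma_pos_of_pos ?_).ne'; linarith
    simp [gegMonic, gegenbauer, bcoef, Finset.sum_range_one]
    field_simp
  | (M+2) =>
    rw [show M + 2 - 1 = M + 1 by omega, show M + 2 - 2 = M by omega]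
    unfold gegMonic gegenbauer
    apply sum_helper ((M+2)/2+1) (M/2+1) ((M+1)/2)
    · omega
    · omega
    · intro K hK
      have h0 : M + 2 - 2*K = 0 := by omega
      simp only [h0, Nat.cast_zero, zero_mul, mul_zero]
    · intro K hK
      have h0 : M - 2*K = 0 := by omega
      simp only [h0, Nat.cast_zero, zero_mul, mul_zero]
    · intro K hK
      obtain ⟨e, he⟩ : ∃ e, M = 2*K+1+e := ⟨M - (2*K+1), by omega⟩
      rw [he]
      exact step α hα hΓ x K e
    · simp only [pow_zero, Nat.mul_zero, Nat.sub_zero, Nat.factorial_zero, Nat.cast_one,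
        one_mul, mul_one]
      rw [show M + 2 - 1 = M + 1 by omega]
      have hg2 := Gamma_nat_ne α hα hΓ (M+2)
      have hg1 := Gamma_nat_ne α hα hΓ (M+1)
      have hf2 : (((M+2).factorial : ℕ) : ℝ) ≠ 0 := by positivity
      have hf1 : (((M+1).factorial : ℕ) : ℝ) ≠ 0 := by positivity
      rw [aux_cancel _ _ _ _ _ hΓ hg2 hf2, aux_cancel _ _ _ _ _ hΓ hg1 hf1,
          show (2:ℝ)^(M+2) = 2^(M+1)*2 by rw [pow_succ]]
      have h2 : ((2:ℝ))^(M+1) ≠ 0 := by positivity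
      field_simp

lemma hasDerivAt_gegQ (α : ℝ) (hα : -(1/2:ℝ) < α) (m : ℕ) (x : ℝ) :
    HasDerivAt (fun t => gegQ α m t) ((m : ℝ) * gegMonic α (m - 1) x) x := by
  have hd := (hasDerivAt_gegMonic α m x).add
    ((hasDerivAt_gegMonic α (m-2) x).const_mul ((m:ℝ) * bcoef (m-1) α))
  have hval := qval α hα m x
  rw [hval] at hd
  exact hd

end AuxGegQ

/-- Partial derivatives of `Q_k^n` for `1 ≤ k ≤ n-1` in the product Gegenbauer setting:
`∂_x Q_k^n = (n-k)[P_k^{n-1} + k b_{k-1}(β) P_{k-2}^{n-3}]` and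
`∂_y Q_k^n = k[P_{k-1}^{n-1} + (n-k) b_{n-k-1}(α) P_{k-1}^{n-3}]`. -/
theorem gegQ2_partials (α β : ℝ) (hα : -(1 / 2 : ℝ) < α) (hβ : -(1 / 2 : ℝ) < β)
    (n k : ℕ) (hk : 1 ≤ k) (hkn : k ≤ n - 1) (hn : 1 ≤ n) (x y : ℝ) :
    deriv (fun t => gegQ2 α β n k t y) x
      = ((n : ℝ) - k) * (gegP α β (n - 1) k x y
          + (k : ℝ) * bcoef (k - 1) β * gegP α β (n - 3) (k - 2) x y) ∧
    deriv (fun t => gegQ2 α β n k x t) y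
      = (k : ℝ) * (gegP α β (n - 1) (k - 1) x y
          + ((n : ℝ) - k) * bcoef (n - k - 1) α * gegP α β (n - 3) (k - 1) x y)  := by
  have hn2 : 2 ≤ n := by omega
  have hcast : ((n - k : ℕ) : ℝ) = (n : ℝ) - k := by
    push_cast [Nat.cast_sub (by omega : k ≤ n)]; ring
  constructor
  · have h := ((hasDerivAt_gegQ α hα (n-k) x).mul_const (gegQ β k y)).deriv
    have hfun : (fun t => gegQ2 α β n k t y) = (fun t => gegQ α (n-k) t * gegQ β k y) := rfl
    rw [hfun, h, hcast]
    unfold gegQ gegP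
    by_cases hk2 : 2 ≤ k
    · rw [show n - 1 - k = n - k - 1 by omega, show n - 3 - (k - 2) = n - k - 1 by omega]
      ring
    · have hk1 : k = 1 := by omega
      subst hk1
      simp only [show (1:ℕ) - 1 = 0 by omega, show (1:ℕ) - 2 = 0 by omega, bcoef,
        Nat.cast_zero, CharP.cast_eq_zero, zero_div, neg_zero, zero_mul, mul_zero,
        add_zero, Nat.cast_one]
      ring
  · have h := ((hasDerivAt_gegQ β hβ k y).const_mul (gegQ α (n-k) x)).deriv
    have hfun : (fun t => gegQ2 α β n k x t) = (fun t => gegQ α (n-k) x * gegQ β k t) := rfl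
    rw [hfun, h]
    unfold gegQ gegP
    by_cases hnk2 : 2 ≤ n - k
    · rw [show n - 1 - (k-1) = n - k by omega, show n - 3 - (k-1) = n - k - 2 by omega, hcast]
      ring
    · have hnk1 : n - k = 1 := by omega
      have hc : (n:ℝ) - (k:ℝ) = 1 := by rw [← hcast, hnk1]; norm_num
      rw [show n - 1 - (k-1) = 1 by omega, hnk1, hc]
      simp only [show (1:ℕ) - 1 = 0 by omega, show (1:ℕ) - 2 = 0 by omega, bcoef,
        Nat.cast_zero, CharP.cast_eq_zero, zero_div, neg_zero, zero_mul, mul_zero,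
        add_zero, Nat.cast_one]
      ring
end

section
/- For the product Gegenbauer weight, ⟨Q_i^n, Q_l^m⟩_∇ = 0 whenever n - m is odd or |n - m| ≥ 3, for all 0 ≤ i ≤ n and 0 ≤ l ≤ m; in particular ⟨Q_0^n, Q_l^m⟩_∇ = 0 and ⟨Q_n^n, Q_l^m⟩_∇ = 0 whenever m < n. -/
open Finset MeasureTheory Polynomial

noncomputable def gegCoef (α : ℝ) (n k : ℕ) : ℝ :=
  (-1) ^ k * Real.Gamma (((n - k : ℕ) : ℝ) + α) /
      (Real.Gamma α * k.factorial * (n - 2 * k).factorial) * 2 ^ (n - 2 * k)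

noncomputable def gegPoly (α : ℝ) (n : ℕ) : Polynomial ℝ :=
  ∑ k ∈ Finset.range (n / 2 + 1), C (gegCoef α n k) * X ^ (n - 2 * k)

lemma gegPoly_derivative_sum (α : ℝ) (n : ℕ) :
    (gegPoly α n).derivative
      = ∑ k ∈ Finset.range (n / 2 + 1),
          C (gegCoef α n k * ((n - 2*k : ℕ) : ℝ)) * X ^ (n - 2*k - 1) := by
  unfold gegPoly
  rw [derivative_sum]
  refine Finset.sum_congr rfl fun k _ => ?_
  rw [derivative_C_mul, derivative_X_pow, C_mul]
  ring

lemma gegPoly_derivative2 (α : ℝ) (n : ℕ) :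
    (gegPoly α n).derivative.derivative
      = ∑ k ∈ Finset.range (n / 2 + 1),
          C (gegCoef α n k * ((n - 2*k : ℕ) : ℝ) * ((n - 2*k - 1 : ℕ) : ℝ)) * X ^ (n - 2*k - 2) := by
  rw [gegPoly_derivative_sum, derivative_sum]
  refine Finset.sum_congr rfl fun k _ => ?_
  rw [derivative_C_mul, derivative_X_pow, C_mul, ← mul_assoc, ← C_mul,
    show n - 2*k - 1 - 1 = n - 2*k - 2 from by omega]
  simp [C_mul]

lemma Gamma_nat_add_ne_zero {α : ℝ} (hα : -(1/2 : ℝ) < α) (hα0 : α ≠ 0) (j : ℕ) :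
    Real.Gamma ((j : ℝ) + α) ≠ 0 := by
  apply Real.Gamma_ne_zero
  intro m hm
  rcases Nat.eq_zero_or_pos (m + j) with h | h
  · obtain ⟨hm0, hj0⟩ := Nat.add_eq_zero.mp h
    subst hm0; subst hj0; simp at hm; exact hα0 hm
  · have h1 : (1 : ℝ) ≤ (m : ℝ) + (j : ℝ) := by exact_mod_cast h
    have : α = -(m : ℝ) - (j : ℝ) := by linarith [hm.symm ▸ (rfl : (j:ℝ) + α = (j:ℝ) + α)]
    linarith

lemma gegCoef_succ {α : ℝ} (hα : -(1/2 : ℝ) < α) (hα0 : α ≠ 0) (k j : ℕ) :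
    gegCoef α (2*k+2+j) (k+1) * (4 * ((k:ℝ)+1) * ((k:ℝ)+1+(j:ℝ)+α))
      = - (gegCoef α (2*k+2+j) k * (((j:ℝ)+2)*((j:ℝ)+1))) := by
  have hΓα : Real.Gamma α ≠ 0 := by
    have := Gamma_nat_add_ne_zero hα hα0 0; simpa using this
  unfold gegCoef
  rw [show 2*k+2+j - (k+1) = (k+1+j) from by omega,
      show 2*k+2+j - 2*(k+1) = j from by omega,
      show 2*k+2+j - k = (k+2+j) from by omega,
      show 2*k+2+j - 2*k = j+2 from by omega]
  have hG : Real.Gamma (((k+2+j : ℕ) : ℝ) + α) = ((k:ℝ)+1+j+α) * Real.Gamma (((k+1+j : ℕ) : ℝ) + α) := by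
    rw [show ((k+2+j : ℕ) : ℝ) + α = (((k+1+j : ℕ) : ℝ) + α) + 1 from by push_cast; ring,
      Real.Gamma_add_one]
    · push_cast; ring
    · have h0 : (0:ℝ) ≤ ((k+j : ℕ) : ℝ) := Nat.cast_nonneg _
      push_cast at h0 ⊢
      nlinarith
  rw [hG, Nat.factorial_succ (k), show j+2 = (j+1)+1 from rfl, Nat.factorial_succ (j+1),
    Nat.factorial_succ j]
  have h2 : (k.factorial : ℝ) ≠ 0 := by positivity
  have h3 : (j.factorial : ℝ) ≠ 0 := by positivity
  push_cast
  field_simp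
  ring

noncomputable def odeA (α : ℝ) (n k : ℕ) : Polynomial ℝ :=
  C (gegCoef α n k * (((n - 2*k : ℕ):ℝ) * (((n - 2*k : ℕ):ℝ) - 1))) * X ^ (n - 2*k - 2)

noncomputable def odeB (α : ℝ) (n k : ℕ) : Polynomial ℝ :=
  C (gegCoef α n k * ((n:ℝ)*((n:ℝ)+2*α) - ((n - 2*k : ℕ):ℝ)*(((n - 2*k : ℕ):ℝ) - 1)
      - (2*α+1)*((n - 2*k : ℕ):ℝ))) * X ^ (n - 2*k)

lemma term_split (a lam c : ℝ) (p : ℕ) :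
    (1 - X^2) * (C (c * ((p : ℕ):ℝ) * ((p - 1 : ℕ):ℝ)) * X^(p-2))
      - (C (2*a+1) * X) * (C (c * ((p : ℕ):ℝ)) * X^(p-1)) + C lam * (C c * X^p)
    = C (c * (((p : ℕ):ℝ) * (((p : ℕ):ℝ) - 1))) * X^(p-2)
      + C (c * (lam - ((p : ℕ):ℝ)*(((p : ℕ):ℝ)-1) - (2*a+1)*((p : ℕ):ℝ))) * X^p := by
  match p with
  | 0 =>
    simp only [Nat.cast_zero, Nat.zero_sub, Nat.cast_ofNat, pow_zero]
    push_cast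
    simp only [map_mul, map_add, map_sub, map_one, map_zero, map_ofNat]
    ring
  | 1 =>
    push_cast
    simp only [map_mul, map_add, map_sub, map_one, map_zero, map_ofNat, map_natCast]
    norm_num
    ring
  | (j+2) =>
    have e1 : j + 2 - 1 = j + 1 := rfl
    have e2 : j + 2 - 2 = j := rfl
    rw [e1, e2]
    push_cast
    simp only [map_mul, map_add, map_sub, map_one, map_zero, map_ofNat, map_natCast]
    ring

lemma gegPoly_ode {α : ℝ} (hα : -(1/2 : ℝ) < α) (hα0 : α ≠ 0) (n : ℕ) :
    (1 - X^2) * (gegPoly α n).derivative.derivative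
      - (C (2*α+1) * X) * (gegPoly α n).derivative
      + C ((n:ℝ)*((n:ℝ)+2*α)) * gegPoly α n = 0 := by
  rw [gegPoly_derivative2, gegPoly_derivative_sum]
  conv_lhs => rw [gegPoly]
  rw [Finset.mul_sum, Finset.mul_sum, Finset.mul_sum, ← Finset.sum_sub_distrib,
    ← Finset.sum_add_distrib]
  have hsplit : ∀ k ∈ Finset.range (n/2+1),
      (1 - X^2) * (C (gegCoef α n k * ((n - 2*k : ℕ):ℝ) * ((n - 2*k - 1 : ℕ):ℝ)) * X^(n-2*k-2))
        - (C (2*α+1) * X) * (C (gegCoef α n k * ((n - 2*k : ℕ):ℝ)) * X^(n-2*k-1))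
        + C ((n:ℝ)*((n:ℝ)+2*α)) * (C (gegCoef α n k) * X^(n-2*k))
      = odeA α n k + odeB α n k := by
    intro k _
    exact term_split α ((n:ℝ)*((n:ℝ)+2*α)) (gegCoef α n k) (n - 2*k)
  rw [Finset.sum_congr rfl hsplit, Finset.sum_add_distrib]
  have hA : ∑ k ∈ Finset.range (n/2+1), odeA α n k = ∑ k ∈ Finset.range (n/2), odeA α n k := by
    rw [Finset.sum_range_succ]
    have hp : n - 2*(n/2) = 0 ∨ n - 2*(n/2) = 1 := by omega
    have : odeA α n (n/2) = 0 := by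
      unfold odeA
      rcases hp with h | h <;> rw [h] <;> norm_num
    rw [this, add_zero]
  have hB : ∑ k ∈ Finset.range (n/2+1), odeB α n k
      = ∑ k ∈ Finset.range (n/2), odeB α n (k+1) := by
    rw [Finset.sum_range_succ']
    have : odeB α n 0 = 0 := by
      unfold odeB
      rw [show n - 2*0 = n from by omega]
      have hz : (n:ℝ)*((n:ℝ)+2*α) - (n:ℝ)*((n:ℝ)-1) - (2*α+1)*(n:ℝ) = 0 := by ring
      rw [hz, mul_zero, C_0, zero_mul]
    rw [this, add_zero]
  rw [hA, hB, ← Finset.sum_add_distrib]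
  apply Finset.sum_eq_zero
  intro k hk
  have hkn : 2*k + 2 ≤ n := by
    have := Finset.mem_range.mp hk; omega
  obtain ⟨j, hj⟩ : ∃ j, n = 2*k+2+j := ⟨n - (2*k+2), by omega⟩
  subst hj
  unfold odeA odeB
  rw [show 2*k+2+j - 2*(k+1) = j from by omega,
      show 2*k+2+j - 2*k - 2 = j from by omega,
      show 2*k+2+j - 2*k = j + 2 from by omega]
  rw [← add_mul]
  rw [← C_add]
  have hc := gegCoef_succ hα hα0 k j
  have hz : gegCoef α (2*k+2+j) k * (((j+2 : ℕ):ℝ) * (((j+2 : ℕ):ℝ) - 1))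
      + gegCoef α (2*k+2+j) (k+1) * (((2*k+2+j : ℕ):ℝ)*(((2*k+2+j : ℕ):ℝ)+2*α)
        - ((j : ℕ):ℝ)*(((j : ℕ):ℝ) - 1) - (2*α+1)*((j : ℕ):ℝ)) = 0 := by
    push_cast at hc ⊢
    linear_combination hc
  rw [hz, C_0, zero_mul]



lemma coefS3 {α : ℝ} (hα : -(1/2 : ℝ) < α) (hα0 : α ≠ 0) (j : ℕ) :
    gegCoef α (j+1) 0 * ((j:ℝ)+1) = 2*((j:ℝ)+α) * gegCoef α j 0 := by
  have hΓα : Real.Gamma α ≠ 0 := by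
    have := Gamma_nat_add_ne_zero hα hα0 0; simpa using this
  unfold gegCoef
  simp only [Nat.mul_zero, Nat.sub_zero]
  have hG : Real.Gamma (((j+1 : ℕ) : ℝ) + α) = ((j:ℝ)+α) * Real.Gamma (((j : ℕ) : ℝ) + α) := by
    rw [show ((j+1 : ℕ) : ℝ) + α = (((j : ℕ) : ℝ) + α) + 1 from by push_cast; ring,
      Real.Gamma_add_one ?_]
    · intro h
      rcases Nat.eq_zero_or_pos j with hj | hj
      · subst hj; simp at h; exact hα0 h
      · have : (1:ℝ) ≤ (j:ℝ) := by exact_mod_cast hj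
        linarith
  rw [hG, Nat.factorial_succ j]
  have h3 : (j.factorial : ℝ) ≠ 0 := by positivity
  push_cast
  field_simp
  ring

lemma coefS4 {α : ℝ} (hα : -(1/2 : ℝ) < α) (hα0 : α ≠ 0) (κ j : ℕ) :
    gegCoef α (2*κ+3+j) (κ+1) * ((j:ℝ)+1)
      = gegCoef α (2*κ+1+j) κ * ((j:ℝ)+1)
        + 2*(((2*κ+3+j : ℕ):ℝ)-1+α) * gegCoef α (2*κ+2+j) (κ+1) := by
  have hΓα : Real.Gamma α ≠ 0 := by
    have := Gamma_nat_add_ne_zero hα hα0 0; simpa using this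
  unfold gegCoef
  rw [show 2*κ+3+j - (κ+1) = κ+2+j from by omega,
      show 2*κ+3+j - 2*(κ+1) = j+1 from by omega,
      show 2*κ+1+j - κ = κ+1+j from by omega,
      show 2*κ+1+j - 2*κ = j+1 from by omega,
      show 2*κ+2+j - (κ+1) = κ+1+j from by omega,
      show 2*κ+2+j - 2*(κ+1) = j from by omega]
  have hG : Real.Gamma (((κ+2+j : ℕ) : ℝ) + α)
      = ((κ:ℝ)+1+j+α) * Real.Gamma (((κ+1+j : ℕ) : ℝ) + α) := by
    rw [show ((κ+2+j : ℕ) : ℝ) + α = (((κ+1+j : ℕ) : ℝ) + α) + 1 from by push_cast; ring,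
      Real.Gamma_add_one]
    · push_cast; ring
    · have h0 : (0:ℝ) ≤ ((κ+j : ℕ) : ℝ) := Nat.cast_nonneg _
      push_cast at h0 ⊢
      nlinarith
  rw [hG, Nat.factorial_succ κ, Nat.factorial_succ j]
  have h2 : (κ.factorial : ℝ) ≠ 0 := by positivity
  have h3 : (j.factorial : ℝ) ≠ 0 := by positivity
  push_cast
  field_simp
  ring


noncomputable def dterm (α : ℝ) (n k : ℕ) : Polynomial ℝ :=
  C (gegCoef α n k * ((n - 2*k : ℕ) : ℝ)) * X ^ (n - 2*k - 1)

lemma gegPoly_derivative (α : ℝ) (n : ℕ) :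
    (gegPoly α n).derivative = ∑ k ∈ Finset.range (n / 2 + 1), dterm α n k := by
  unfold gegPoly dterm
  rw [derivative_sum]
  refine Finset.sum_congr rfl fun k _ => ?_
  rw [derivative_C_mul, derivative_X_pow, C_mul]
  ring

lemma dterm_zero {α : ℝ} {n k : ℕ} (h : n - 2*k = 0) : dterm α n k = 0 := by
  unfold dterm
  rw [h]
  norm_num

lemma gegPoly_contig {α : ℝ} (hα : -(1/2 : ℝ) < α) (hα0 : α ≠ 0) (M : ℕ) :
    (gegPoly α (M+2)).derivative
      = (gegPoly α M).derivative
        + C (2*(((M:ℝ)+2)-1+α)) * gegPoly α (M+1) := by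
  rw [gegPoly_derivative, gegPoly_derivative]
  conv_rhs => rw [gegPoly]
  rw [Finset.mul_sum]
  set K := (M+1)/2 + 1 with hK
  -- gterm normalization
  have hgt : ∀ k, C (2*(((M:ℝ)+2)-1+α)) * (C (gegCoef α (M+1) k) * X ^ (M+1 - 2*k))
      = C (2*(((M:ℝ)+2)-1+α) * gegCoef α (M+1) k) * X ^ (M+1 - 2*k) := by
    intro k; rw [← mul_assoc, ← C_mul]
  -- LHS range to K
  have hL : ∑ k ∈ Finset.range ((M+2)/2 + 1), dterm α (M+2) k
      = ∑ k ∈ Finset.range K, dterm α (M+2) k := by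
    rcases Nat.even_or_odd M with h | h
    · obtain ⟨t, ht⟩ := h
      have h1 : (M+2)/2 + 1 = K + 1 := by omega
      rw [h1, Finset.sum_range_succ, dterm_zero (by omega)]
      simp
    · obtain ⟨t, ht⟩ := h
      have h1 : (M+2)/2 + 1 = K := by omega
      rw [h1]
  -- middle range to K
  have hM2 : ∑ k ∈ Finset.range (M/2 + 1), dterm α M k
      = ∑ k ∈ Finset.range K, dterm α M k := by
    rcases Nat.even_or_odd M with h | h
    · obtain ⟨t, ht⟩ := h
      have h1 : M/2 + 1 = K := by omega
      rw [h1]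
    · obtain ⟨t, ht⟩ := h
      have h1 : M/2 + 1 + 1 = K := by omega
      have h2 : ∑ k ∈ Finset.range (M/2+1+1), dterm α M k
          = ∑ k ∈ Finset.range (M/2+1), dterm α M k := by
        rw [Finset.sum_range_succ, dterm_zero (by omega), add_zero]
      rw [← h1, h2]
  rw [hL, hM2]
  -- shift the middle sum
  have hshift : ∑ k ∈ Finset.range K, dterm α M k
      = ∑ k ∈ Finset.range K, (if k = 0 then 0 else dterm α M (k-1)) := by
    have h1 : ∑ k ∈ Finset.range (K+1), (if k = 0 then 0 else dterm α M (k-1))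
        = ∑ k ∈ Finset.range K, dterm α M k := by
      rw [Finset.sum_range_succ']
      simp
    have h2 : ∑ k ∈ Finset.range (K+1), (if k = 0 then 0 else dterm α M (k-1))
        = ∑ k ∈ Finset.range K, (if k = 0 then 0 else dterm α M (k-1))
          + (if K = 0 then 0 else dterm α M (K-1)) := Finset.sum_range_succ _ _
    have h3 : (if K = 0 then 0 else dterm α M (K-1)) = 0 := by
      have : K ≠ 0 := by omega
      rw [if_neg this]
      exact dterm_zero (by omega)
    rw [h2, h3, add_zero] at h1
    exact h1.symm
  rw [hshift, ← Finset.sum_add_distrib]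
  refine Finset.sum_congr rfl fun k hk => ?_
  rw [hgt]
  have hkK : k < K := Finset.mem_range.mp hk
  rcases Nat.eq_zero_or_pos k with hk0 | hkpos
  · subst hk0
    rw [if_pos rfl, zero_add]
    unfold dterm
    simp only [Nat.mul_zero, Nat.sub_zero]
    rw [show M+2-1 = M+1 from rfl]
    have h'' : gegCoef α (M+2) 0 * ((M+2 : ℕ):ℝ)
        = 2*(((M:ℝ)+2)-1+α) * gegCoef α (M+1) 0 := by
      have h' := coefS3 hα hα0 (M+1)
      push_cast at h' ⊢
      linear_combination h'
    rw [h'']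
  · obtain ⟨κ, hκ⟩ : ∃ κ, k = κ + 1 := ⟨k-1, by omega⟩
    subst hκ
    rw [if_neg (Nat.succ_ne_zero κ)]
    obtain ⟨j, hj⟩ : ∃ j, M = 2*κ+1+j := ⟨M - (2*κ+1), by omega⟩
    subst hj
    rw [show 2*κ+1+j+2 = 2*κ+3+j from by omega,
        show 2*κ+1+j+1 = 2*κ+2+j from by omega,
        show κ+1-1 = κ from rfl]
    unfold dterm
    rw [show 2*κ+3+j - 2*(κ+1) = j+1 from by omega,
        show 2*κ+1+j - 2*κ = j+1 from by omega,
        show 2*κ+2+j - 2*(κ+1) = j from by omega,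
        show j+1-1 = j from rfl]
    rw [← add_mul, ← C_add]
    have h'' : gegCoef α (2*κ+3+j) (κ+1) * ((j+1 : ℕ):ℝ)
        = gegCoef α (2*κ+1+j) κ * ((j+1 : ℕ):ℝ)
          + 2*(((2*κ+1+j : ℕ):ℝ)+2-1+α) * gegCoef α (2*κ+2+j) (κ+1) := by
      have h' := coefS4 hα hα0 κ j
      push_cast at h' ⊢
      linear_combination h'
    rw [h'']


noncomputable def mc (α : ℝ) (n : ℕ) : ℝ :=
  Real.Gamma α * n.factorial / (2 ^ n * Real.Gamma ((n : ℝ) + α))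

noncomputable def Pmon (α : ℝ) (n : ℕ) : Polynomial ℝ := C (mc α n) * gegPoly α n

noncomputable def qPoly (α : ℝ) (m : ℕ) : Polynomial ℝ :=
  Pmon α m + C ((m : ℝ) * bcoef (m - 1) α) * Pmon α (m - 2)

lemma nat_add_ne {α : ℝ} (hα : -(1/2 : ℝ) < α) (hα0 : α ≠ 0) (j : ℕ) : (j:ℝ) + α ≠ 0 := by
  rcases Nat.eq_zero_or_pos j with h | h
  · subst h; simpa using hα0
  · have : (1:ℝ) ≤ (j:ℝ) := by exact_mod_cast h
    intro hc; linarith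

lemma GammaCast {α : ℝ} (hα : -(1/2 : ℝ) < α) (hα0 : α ≠ 0) (j : ℕ) :
    Real.Gamma (((j+1 : ℕ):ℝ) + α) = ((j:ℝ) + α) * Real.Gamma (((j : ℕ):ℝ) + α) := by
  rw [show ((j+1 : ℕ) : ℝ) + α = (((j : ℕ) : ℝ) + α) + 1 from by push_cast; ring,
    Real.Gamma_add_one (nat_add_ne hα hα0 j)]

lemma coefS2 {α : ℝ} (hα : -(1/2 : ℝ) < α) (hα0 : α ≠ 0) (M : ℕ) :
    mc α (M+2) * (2*(((M:ℝ)+2)-1+α)) = ((M+2 : ℕ):ℝ) * mc α (M+1) := by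
  have hΓ1 : Real.Gamma (((M+1 : ℕ):ℝ) + α) ≠ 0 := Gamma_nat_add_ne_zero hα hα0 (M+1)
  have hΓ2 : Real.Gamma (((M+2 : ℕ):ℝ) + α) ≠ 0 := Gamma_nat_add_ne_zero hα hα0 (M+2)
  unfold mc
  rw [show (M+2) = (M+1)+1 from rfl, GammaCast hα hα0 (M+1), Nat.factorial_succ (M+1)]
  have hne : ((M+1 : ℕ):ℝ) + α ≠ 0 := nat_add_ne hα hα0 (M+1)
  have hd1 : (2:ℝ)^((M+1)+1) * (((M+1 : ℕ):ℝ) + α) * Real.Gamma (((M+1 : ℕ):ℝ) + α) ≠ 0 :=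
    mul_ne_zero (mul_ne_zero (by positivity) hne) hΓ1
  have hd2 : (2:ℝ)^(M+1) * Real.Gamma (((M+1 : ℕ):ℝ) + α) ≠ 0 :=
    mul_ne_zero (by positivity) hΓ1
  rw [show (2:ℝ)^((M+1)+1) * ((((M+1 : ℕ):ℝ) + α) * Real.Gamma (((M+1 : ℕ):ℝ) + α))
      = (2:ℝ)^((M+1)+1) * (((M+1 : ℕ):ℝ) + α) * Real.Gamma (((M+1 : ℕ):ℝ) + α) from by ring]
  rw [div_mul_eq_mul_div, mul_comm (((M+2:ℕ):ℝ)) _, div_mul_eq_mul_div,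
    div_eq_div_iff hd1 hd2]
  push_cast
  ring

lemma coefS1 {α : ℝ} (hα : -(1/2 : ℝ) < α) (hα0 : α ≠ 0) (M : ℕ) :
    mc α (M+2) + ((M+2 : ℕ):ℝ) * bcoef (M+1) α * mc α M = 0 := by
  have hΓ0 : Real.Gamma (((M : ℕ):ℝ) + α) ≠ 0 := Gamma_nat_add_ne_zero hα hα0 M
  have hΓ2 : Real.Gamma (((M+2 : ℕ):ℝ) + α) ≠ 0 := Gamma_nat_add_ne_zero hα hα0 (M+2)
  have hne0 : ((M:ℝ) + α) ≠ 0 := nat_add_ne hα hα0 M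
  have hne1 : ((M:ℝ) + 1 + α) ≠ 0 := by
    have := nat_add_ne hα hα0 (M+1); push_cast at this; linarith [this]  -- fix below
  have hne0' : ((M+1 : ℕ):ℝ) + α ≠ 0 := nat_add_ne hα hα0 (M+1)
  unfold mc bcoef
  rw [show (M+2) = (M+1)+1 from rfl, GammaCast hα hα0 (M+1), GammaCast hα hα0 M,
    Nat.factorial_succ (M+1), Nat.factorial_succ M]
  have h1 : (M.factorial : ℝ) ≠ 0 := by positivity
  have hfix : ((M+1 : ℕ):ℝ) + α - 1 = ((M : ℕ):ℝ) + α := by push_cast; ring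
  rw [hfix]
  have hΓα : Real.Gamma α ≠ 0 := by
    have := Gamma_nat_add_ne_zero hα hα0 0; simpa using this
  field_simp
  push_cast
  ring

lemma qPoly_derivative {α : ℝ} (hα : -(1/2 : ℝ) < α) (hα0 : α ≠ 0) (m : ℕ) :
    (qPoly α m).derivative = C (m : ℝ) * Pmon α (m - 1) := by
  match m with
  | 0 =>
    have : ((0:ℕ) : ℝ) = 0 := by norm_num
    rw [qPoly, this]
    simp [Pmon, gegPoly]
  | 1 =>
    have hb : bcoef (1-1) α = 0 := by simp [bcoef]
    rw [qPoly, hb]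
    simp only [mul_zero, map_zero, zero_mul, add_zero]
    rw [Pmon, derivative_C_mul, gegPoly_derivative]
    rw [show (1:ℕ)/2+1 = 1 from rfl, Finset.sum_range_one]
    unfold dterm
    rw [show (1:ℕ) - 2*0 = 1 from rfl, show (1:ℕ) - 2*0 - 1 = 0 from rfl, pow_zero, mul_one,
      ← C_mul]
    rw [Pmon, gegPoly, show (0:ℕ)/2+1 = 1 from rfl, Finset.sum_range_one,
      show (0:ℕ) - 2*0 = 0 from rfl, pow_zero, mul_one, ← C_mul, ← C_mul]
    congr 1
    unfold mc gegCoef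
    have hΓ1 : Real.Gamma (((1 : ℕ):ℝ) + α) ≠ 0 := Gamma_nat_add_ne_zero hα hα0 1
    have hΓ0 : Real.Gamma (((0 : ℕ):ℝ) + α) ≠ 0 := Gamma_nat_add_ne_zero hα hα0 0
    rw [show (1:ℕ) = 0+1 from rfl, GammaCast hα hα0 0]
    push_cast
    have hΓα : Real.Gamma α ≠ 0 := by
      have := Gamma_nat_add_ne_zero hα hα0 0; simpa using this
    simp only [Nat.cast_zero, zero_add] at hΓ0 ⊢
    field_simp
  | (M+2) =>
    rw [qPoly, show M+2-2 = M from rfl, show M+2-1 = M+1 from rfl]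
    rw [derivative_add, Pmon, derivative_C_mul, derivative_C_mul, Pmon, derivative_C_mul]
    rw [gegPoly_contig hα hα0 M]
    have e1 : C (mc α (M+2)) + C (((M+2:ℕ):ℝ) * bcoef (M+1) α) * C (mc α M) = 0 := by
      rw [← C_mul, ← C_add, coefS1 hα hα0 M, C_0]
    have e2 : C (mc α (M+2)) * C (2*(((M:ℝ)+2)-1+α)) = C ((M+2 : ℕ):ℝ) * C (mc α (M+1)) := by
      rw [← C_mul, ← C_mul, coefS2 hα hα0 M]
    rw [Pmon]
    linear_combination e1 * (gegPoly α M).derivative + e2 * gegPoly α (M+1)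


lemma weight_integrableOn {c : ℝ} (hc : -1 < c) {h : ℝ → ℝ} (hh : Continuous h) :
    IntegrableOn (fun x => (1 - x^2) ^ c * h x) (Set.Ioc (-1 : ℝ) 1) := by
  have piece1 : IntegrableOn (fun x => (1 - x^2) ^ c * h x) (Set.Ioc (0:ℝ) 1) := by
    have h1m : IntervalIntegrable (fun x : ℝ => (1-x) ^ c) volume 0 1 := by
      have := (intervalIntegral.intervalIntegrable_rpow' (a := 0) (b := 1) hc).comp_sub_left 1
      simpa using this.symm
    have hI1 : IntegrableOn (fun x : ℝ => (1-x) ^ c) (Set.Icc (0:ℝ) 1) := by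
      rw [integrableOn_Icc_iff_integrableOn_Ioc]
      exact (intervalIntegrable_iff_integrableOn_Ioc_of_le (by norm_num)).mp h1m
    have hcont : ContinuousOn (fun x : ℝ => (1+x) ^ c * h x) (Set.Icc (0:ℝ) 1) := by
      apply ContinuousOn.mul _ hh.continuousOn
      apply ContinuousOn.rpow_const (by fun_prop)
      intro x hx
      left
      have := hx.1
      simp only [Set.mem_Icc] at hx
      nlinarith [hx.1]
    have hmul : IntegrableOn (fun x : ℝ => (1-x) ^ c * ((1+x) ^ c * h x)) (Set.Icc (0:ℝ) 1) :=
      hI1.mul_continuousOn hcont isCompact_Icc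
    apply IntegrableOn.congr_fun (hmul.mono_set Set.Ioc_subset_Icc_self) _ measurableSet_Ioc
    intro x hx
    simp only [Set.mem_Ioc] at hx
    show (1 - x) ^ c * ((1+x) ^ c * h x) = (1 - x^2) ^ c * h x
    have e : (1 : ℝ) - x^2 = (1-x) * (1+x) := by ring
    rw [e, Real.mul_rpow (by nlinarith) (by nlinarith), mul_assoc]
  have piece2 : IntegrableOn (fun x => (1 - x^2) ^ c * h x) (Set.Ioc (-1:ℝ) 0) := by
    have h1m : IntervalIntegrable (fun x : ℝ => (1+x) ^ c) volume (-1) 0 := by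
      have := (intervalIntegral.intervalIntegrable_rpow' (a := 0) (b := 1) hc).comp_add_right 1
      simp only [zero_sub] at this
      have h2 : (1:ℝ) - 1 = 0 := by norm_num
      rw [h2] at this
      have : IntervalIntegrable (fun x : ℝ => (x+1) ^ c) volume (-1) 0 := this
      apply this.congr
      intro x _; show (x + 1) ^ c = (1 + x) ^ c
      rw [add_comm]
    have hI1 : IntegrableOn (fun x : ℝ => (1+x) ^ c) (Set.Icc (-1:ℝ) 0) := by
      rw [integrableOn_Icc_iff_integrableOn_Ioc]
      exact (intervalIntegrable_iff_integrableOn_Ioc_of_le (by norm_num)).mp h1m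
    have hcont : ContinuousOn (fun x : ℝ => (1-x) ^ c * h x) (Set.Icc (-1:ℝ) 0) := by
      apply ContinuousOn.mul _ hh.continuousOn
      apply ContinuousOn.rpow_const (by fun_prop)
      intro x hx
      left
      simp only [Set.mem_Icc] at hx
      nlinarith [hx.2]
    have hmul : IntegrableOn (fun x : ℝ => (1+x) ^ c * ((1-x) ^ c * h x)) (Set.Icc (-1:ℝ) 0) :=
      hI1.mul_continuousOn hcont isCompact_Icc
    apply IntegrableOn.congr_fun (hmul.mono_set Set.Ioc_subset_Icc_self) _ measurableSet_Ioc
    intro x hx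
    simp only [Set.mem_Ioc] at hx
    show (1 + x) ^ c * ((1-x) ^ c * h x) = (1 - x^2) ^ c * h x
    have e : (1 : ℝ) - x^2 = (1+x) * (1-x) := by ring
    rw [e, Real.mul_rpow (by nlinarith) (by nlinarith), mul_assoc]
  have := piece2.union piece1
  rwa [Set.Ioc_union_Ioc_eq_Ioc (by norm_num) (by norm_num)] at this

lemma SL {γ : ℝ} (hγ : -(1/2:ℝ) < γ) (p q : Polynomial ℝ) (lam : ℝ)
    (hODE : (1 - X^2) * p.derivative.derivative - (C (2*γ+1) * X) * p.derivative
      + C lam * p = 0) :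
    lam * ∫ x in (-1:ℝ)..1, (1 - x^2) ^ (γ - 1/2) * (p.eval x * q.eval x)
      = ∫ x in (-1:ℝ)..1, (1 - x^2) ^ (γ + 1/2) * (p.derivative.eval x * q.derivative.eval x) := by
  set F := fun x : ℝ => (1 - x^2) ^ (γ + 1/2) * (p.derivative.eval x * q.eval x) with hF
  set G := fun x : ℝ => (1 - x^2) ^ (γ + 1/2) * (p.derivative.eval x * q.derivative.eval x)
      - lam * ((1 - x^2) ^ (γ - 1/2) * (p.eval x * q.eval x)) with hG
  have hexp : γ + 1/2 = (γ - 1/2) + 1 := by ring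
  have hderiv : ∀ x ∈ Set.Ioo (-1:ℝ) 1, HasDerivAt F (G x) x := by
    intro x hx
    obtain ⟨hx1, hx2⟩ := hx
    have hpos : (0:ℝ) < 1 - x^2 := by nlinarith
    have hinner : HasDerivAt (fun y : ℝ => 1 - y^2) (-(2*x)) x := by
      simpa using ((hasDerivAt_pow 2 x).const_sub 1)
    have hu : HasDerivAt (fun y : ℝ => (1 - y^2) ^ (γ + 1/2))
        (-(2*x) * (γ + 1/2) * (1 - x^2) ^ (γ + 1/2 - 1)) x :=
      hinner.rpow_const (Or.inl hpos.ne')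
    have hv := p.derivative.hasDerivAt x
    have hw := q.hasDerivAt x
    have hprod := hu.mul (hv.mul hw)
    have hode : (1 - x^2) * (p.derivative.derivative).eval x
        - (2*γ+1) * x * (p.derivative).eval x + lam * p.eval x = 0 := by
      have := congrArg (fun r => Polynomial.eval x r) hODE
      simpa using this
    have hsplit : (1 - x^2) ^ (γ + 1/2) = (1 - x^2) ^ (γ - 1/2) * (1 - x^2) := by
      rw [hexp, Real.rpow_add hpos, Real.rpow_one]
    have hexp2 : γ + 1/2 - 1 = γ - 1/2 := by ring
    rw [hexp2] at hu hprod
    refine hprod.congr_deriv ?_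
    simp only [hG, Pi.mul_apply]
    rw [hsplit]
    linear_combination ((1 - x^2) ^ (γ - 1/2) * q.eval x) * hode
  have hcontF : ContinuousOn F (Set.Icc (-1:ℝ) 1) := by
    apply Continuous.continuousOn
    apply Continuous.mul
    · apply Continuous.rpow_const (by fun_prop)
      intro x; right; linarith
    · exact (p.derivative.continuous).mul q.continuous
  have hint1 : IntervalIntegrable
      (fun x : ℝ => (1 - x^2) ^ (γ + 1/2) * (p.derivative.eval x * q.derivative.eval x))
      volume (-1) 1 := by
    rw [intervalIntegrable_iff_integrableOn_Ioc_of_le (by norm_num)]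
    exact weight_integrableOn (by linarith) ((p.derivative.continuous).mul q.derivative.continuous)
  have hint2 : IntervalIntegrable
      (fun x : ℝ => (1 - x^2) ^ (γ - 1/2) * (p.eval x * q.eval x)) volume (-1) 1 := by
    rw [intervalIntegrable_iff_integrableOn_Ioc_of_le (by norm_num)]
    exact weight_integrableOn (by linarith) (p.continuous.mul q.continuous)
  have hintG : IntervalIntegrable G volume (-1) 1 := hint1.sub (hint2.const_mul lam)
  have hFTC : ∫ x in (-1:ℝ)..1, G x = F 1 - F (-1) :=
    intervalIntegral.integral_eq_sub_of_hasDeriv_right_of_le (by norm_num) hcontF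
      (fun x hx => (hderiv x hx).hasDerivWithinAt) hintG
  have hF1 : F 1 = 0 := by
    simp only [hF]
    norm_num
    rw [Real.zero_rpow (by linarith)]
    simp
  have hFm1 : F (-1) = 0 := by
    simp only [hF]
    norm_num
    rw [Real.zero_rpow (by linarith)]
    simp
  rw [hF1, hFm1, sub_zero] at hFTC
  have hsplit2 : ∫ x in (-1:ℝ)..1, G x
      = (∫ x in (-1:ℝ)..1, (1 - x^2) ^ (γ + 1/2) * (p.derivative.eval x * q.derivative.eval x))
        - lam * ∫ x in (-1:ℝ)..1, (1 - x^2) ^ (γ - 1/2) * (p.eval x * q.eval x) := by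
    simp only [hG]
    rw [intervalIntegral.integral_sub hint1 (hint2.const_mul lam),
      intervalIntegral.integral_const_mul]
  rw [hsplit2] at hFTC
  linarith [hFTC]


lemma gegenbauer_eq_eval (α : ℝ) (n : ℕ) (x : ℝ) :
    gegenbauer α n x = (gegPoly α n).eval x := by
  simp only [gegenbauer, gegPoly, gegCoef, Polynomial.eval_finset_sum, Polynomial.eval_mul,
    Polynomial.eval_C, Polynomial.eval_pow, Polynomial.eval_X]
  refine Finset.sum_congr rfl fun k _ => ?_
  rw [mul_pow]; ring

lemma gegenbauer_zero_param (n : ℕ) (x : ℝ) : gegenbauer 0 n x = 0 := by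
  simp [gegenbauer, Real.Gamma_zero]

lemma gegQ_zero_param (m : ℕ) (x : ℝ) : gegQ 0 m x = 0 := by
  simp [gegQ, gegMonic, gegenbauer_zero_param]

lemma gegMonic_eval (α : ℝ) (n : ℕ) (x : ℝ) : gegMonic α n x = (Pmon α n).eval x := by
  rw [gegMonic, gegenbauer_eq_eval, Pmon, eval_mul, eval_C, mc]

lemma gegQ_eval (α : ℝ) (m : ℕ) (x : ℝ) : gegQ α m x = (qPoly α m).eval x := by
  rw [gegQ, qPoly, eval_add, eval_mul, eval_C, gegMonic_eval, gegMonic_eval]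

lemma gegQ_fun (α : ℝ) (m : ℕ) : gegQ α m = fun x => (qPoly α m).eval x :=
  funext fun x => gegQ_eval α m x

lemma deriv_gegQ {α : ℝ} (hα : -(1/2:ℝ) < α) (hα0 : α ≠ 0) (a : ℕ) :
    deriv (gegQ α a) = fun x => (a : ℝ) * (Pmon α (a-1)).eval x := by
  rw [gegQ_fun]
  funext x
  rw [Polynomial.deriv, qPoly_derivative hα hα0, eval_mul, eval_C]

lemma gegQ_differentiableAt (α : ℝ) (m : ℕ) (x : ℝ) : DifferentiableAt ℝ (gegQ α m) x := by
  rw [gegQ_fun]; exact (qPoly α m).differentiableAt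

lemma gegQ_continuous (α : ℝ) (m : ℕ) : Continuous (gegQ α m) := by
  rw [gegQ_fun]; exact (qPoly α m).continuous

lemma deriv_gegQ_continuous {α : ℝ} (hα : -(1/2:ℝ) < α) (hα0 : α ≠ 0) (a : ℕ) :
    Continuous (deriv (gegQ α a)) := by
  rw [deriv_gegQ hα hα0]
  exact continuous_const.mul (Pmon α (a-1)).continuous

lemma wInt2 {c : ℝ} (hc : -1 < c) {f g : ℝ → ℝ} (hf : Continuous f) (hg : Continuous g) :
    IntegrableOn (fun x => f x * g x * (1 - x^2) ^ c) (Set.Ioc (-1:ℝ) 1) := by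
  apply (weight_integrableOn hc (hf.mul hg)).congr_fun _ measurableSet_Ioc
  intro x _
  show (1 - x^2) ^ c * (f x * g x) = f x * g x * (1 - x^2) ^ c
  ring

lemma lam_ne {γ : ℝ} (hγ : -(1/2:ℝ) < γ) {a b : ℕ} (hab : a ≠ b) :
    (a:ℝ)*((a:ℝ)+2*γ) - (b:ℝ)*((b:ℝ)+2*γ) ≠ 0 := by
  have h1 : (a:ℝ)*((a:ℝ)+2*γ) - (b:ℝ)*((b:ℝ)+2*γ)
      = ((a:ℝ)-(b:ℝ)) * ((a:ℝ)+(b:ℝ)+2*γ) := by ring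
  rw [h1]
  apply mul_ne_zero
  · intro h
    exact hab (by exact_mod_cast sub_eq_zero.mp h)
  · have h2 : (1:ℝ) ≤ (a:ℝ)+(b:ℝ) := by
      have : 1 ≤ a + b := by omega
      exact_mod_cast this
    intro h; linarith

lemma gegPoly_orth {γ : ℝ} (hγ : -(1/2:ℝ) < γ) (hγ0 : γ ≠ 0) {a b : ℕ} (hab : a ≠ b) :
    ∫ x in Set.Ioc (-1:ℝ) 1,
      (gegPoly γ a).eval x * (gegPoly γ b).eval x * (1 - x^2) ^ (γ - 1/2) = 0 := by
  have h1 := SL hγ (gegPoly γ a) (gegPoly γ b) ((a:ℝ)*((a:ℝ)+2*γ)) (gegPoly_ode hγ hγ0 a)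
  have h2 := SL hγ (gegPoly γ b) (gegPoly γ a) ((b:ℝ)*((b:ℝ)+2*γ)) (gegPoly_ode hγ hγ0 b)
  have e1 : (∫ x in (-1:ℝ)..1, (1 - x^2) ^ (γ + 1/2)
        * ((gegPoly γ b).derivative.eval x * (gegPoly γ a).derivative.eval x))
      = ∫ x in (-1:ℝ)..1, (1 - x^2) ^ (γ + 1/2)
        * ((gegPoly γ a).derivative.eval x * (gegPoly γ b).derivative.eval x) :=
    intervalIntegral.integral_congr (fun x _ => by ring)
  have e2 : (∫ x in (-1:ℝ)..1, (1 - x^2) ^ (γ - 1/2)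
        * ((gegPoly γ b).eval x * (gegPoly γ a).eval x))
      = ∫ x in (-1:ℝ)..1, (1 - x^2) ^ (γ - 1/2)
        * ((gegPoly γ a).eval x * (gegPoly γ b).eval x) :=
    intervalIntegral.integral_congr (fun x _ => by ring)
  rw [e1, e2] at h2
  have key : ((a:ℝ)*((a:ℝ)+2*γ) - (b:ℝ)*((b:ℝ)+2*γ))
      * ∫ x in (-1:ℝ)..1, (1 - x^2) ^ (γ - 1/2)
        * ((gegPoly γ a).eval x * (gegPoly γ b).eval x) = 0 := by
    rw [sub_mul, h1, h2, sub_self]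
  have hz := (mul_eq_zero.mp key).resolve_left (lam_ne hγ hab)
  rw [← intervalIntegral.integral_of_le (by norm_num : (-1:ℝ) ≤ 1)]
  calc (∫ x in (-1:ℝ)..1, (gegPoly γ a).eval x * (gegPoly γ b).eval x * (1-x^2)^(γ-1/2))
      = ∫ x in (-1:ℝ)..1, (1-x^2)^(γ-1/2) * ((gegPoly γ a).eval x * (gegPoly γ b).eval x) :=
        intervalIntegral.integral_congr (fun x _ => by ring)
    _ = 0 := hz

lemma Pmon_orth {γ : ℝ} (hγ : -(1/2:ℝ) < γ) (hγ0 : γ ≠ 0) {a b : ℕ} (hab : a ≠ b) :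
    ∫ x in Set.Ioc (-1:ℝ) 1,
      (Pmon γ a).eval x * (Pmon γ b).eval x * (1 - x^2) ^ (γ - 1/2) = 0 := by
  have hfun : (fun x => (Pmon γ a).eval x * (Pmon γ b).eval x * (1 - x^2) ^ (γ-1/2))
      = fun x => (mc γ a * mc γ b)
        * ((gegPoly γ a).eval x * (gegPoly γ b).eval x * (1 - x^2) ^ (γ-1/2)) := by
    funext x; simp only [Pmon, eval_mul, eval_C]; ring
  rw [hfun, MeasureTheory.integral_const_mul, gegPoly_orth hγ hγ0 hab, mul_zero]

lemma deriv_orth {γ : ℝ} (hγ : -(1/2:ℝ) < γ) (hγ0 : γ ≠ 0) {a b : ℕ}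
    (hab : a ≠ b ∨ a = 0 ∨ b = 0) :
    ∫ x in Set.Ioc (-1:ℝ) 1,
      deriv (gegQ γ a) x * deriv (gegQ γ b) x * (1 - x^2) ^ (γ - 1/2) = 0 := by
  rw [deriv_gegQ hγ hγ0 a, deriv_gegQ hγ hγ0 b]
  by_cases ha : a = 0
  · subst ha; simp
  · by_cases hb : b = 0
    · subst hb; simp
    · have hab' : a - 1 ≠ b - 1 := by
        rcases hab with h | h | h
        · omega
        · omega
        · omega
      have hfun : (fun x => ((a:ℝ) * (Pmon γ (a-1)).eval x) * ((b:ℝ) * (Pmon γ (b-1)).eval x)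
            * (1 - x^2) ^ (γ - 1/2))
          = fun x => ((a:ℝ)*(b:ℝ))
            * ((Pmon γ (a-1)).eval x * (Pmon γ (b-1)).eval x * (1 - x^2) ^ (γ-1/2)) := by
        funext x; ring
      rw [hfun, MeasureTheory.integral_const_mul, Pmon_orth hγ hγ0 hab', mul_zero]

lemma qcoef_vanish (γ : ℝ) {a : ℕ} (ha : a ≤ 1) : (a:ℝ) * bcoef (a-1) γ = 0 := by
  interval_cases a
  · simp
  · simp [bcoef]

lemma gegQ_orth {γ : ℝ} (hγ : -(1/2:ℝ) < γ) (hγ0 : γ ≠ 0) {a b : ℕ}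
    (h : Odd ((a:ℤ) - (b:ℤ)) ∨ 3 ≤ |(a:ℤ) - (b:ℤ)|) :
    ∫ x in Set.Ioc (-1:ℝ) 1,
      gegQ γ a x * gegQ γ b x * (1 - x^2) ^ (γ - 1/2) = 0 := by
  have hfacts : a ≠ b ∧ (2 ≤ a → a - 2 ≠ b) ∧ (2 ≤ b → a ≠ b - 2)
      ∧ (2 ≤ a → 2 ≤ b → a - 2 ≠ b - 2) := by
    rcases h with ⟨t, ht⟩ | habs
    · exact ⟨by omega, by omega, by omega, by omega⟩
    · rcases le_abs.mp habs with h' | h'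
      · exact ⟨by omega, by omega, by omega, by omega⟩
      · exact ⟨by omega, by omega, by omega, by omega⟩
  obtain ⟨h1, h2, h3, h4⟩ := hfacts
  have hI : ∀ (p q : Polynomial ℝ),
      IntegrableOn (fun x => p.eval x * q.eval x * (1-x^2) ^ (γ-1/2)) (Set.Ioc (-1:ℝ) 1) :=
    fun p q => wInt2 (by linarith) p.continuous q.continuous
  have hsplit : (fun x => gegQ γ a x * gegQ γ b x * (1 - x^2) ^ (γ - 1/2))
      = fun x => ((Pmon γ a).eval x * (Pmon γ b).eval x * (1-x^2) ^ (γ-1/2))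
        + (((a:ℝ) * bcoef (a-1) γ)
            * ((Pmon γ (a-2)).eval x * (Pmon γ b).eval x * (1-x^2) ^ (γ-1/2))
        + (((b:ℝ) * bcoef (b-1) γ)
            * ((Pmon γ a).eval x * (Pmon γ (b-2)).eval x * (1-x^2) ^ (γ-1/2))
        + ((a:ℝ) * bcoef (a-1) γ) * ((b:ℝ) * bcoef (b-1) γ)
            * ((Pmon γ (a-2)).eval x * (Pmon γ (b-2)).eval x * (1-x^2) ^ (γ-1/2)))) := by
    funext x
    rw [gegQ, gegQ, gegMonic_eval, gegMonic_eval, gegMonic_eval, gegMonic_eval]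
    ring
  rw [hsplit]
  have hI1 : IntegrableOn
      (fun x => (Pmon γ a).eval x * (Pmon γ b).eval x * (1-x^2) ^ (γ-1/2))
      (Set.Ioc (-1:ℝ) 1) := hI _ _
  have hI2 : IntegrableOn
      (fun x => ((a:ℝ) * bcoef (a-1) γ)
        * ((Pmon γ (a-2)).eval x * (Pmon γ b).eval x * (1-x^2) ^ (γ-1/2)))
      (Set.Ioc (-1:ℝ) 1) := (hI _ _).const_mul _
  have hI3 : IntegrableOn
      (fun x => ((b:ℝ) * bcoef (b-1) γ)
        * ((Pmon γ a).eval x * (Pmon γ (b-2)).eval x * (1-x^2) ^ (γ-1/2)))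
      (Set.Ioc (-1:ℝ) 1) := (hI _ _).const_mul _
  have hI4 : IntegrableOn
      (fun x => ((a:ℝ) * bcoef (a-1) γ) * ((b:ℝ) * bcoef (b-1) γ)
        * ((Pmon γ (a-2)).eval x * (Pmon γ (b-2)).eval x * (1-x^2) ^ (γ-1/2)))
      (Set.Ioc (-1:ℝ) 1) := (hI _ _).const_mul _
  have hI34 : IntegrableOn
      (fun x => ((b:ℝ) * bcoef (b-1) γ)
        * ((Pmon γ a).eval x * (Pmon γ (b-2)).eval x * (1-x^2) ^ (γ-1/2))
        + ((a:ℝ) * bcoef (a-1) γ) * ((b:ℝ) * bcoef (b-1) γ)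
        * ((Pmon γ (a-2)).eval x * (Pmon γ (b-2)).eval x * (1-x^2) ^ (γ-1/2)))
      (Set.Ioc (-1:ℝ) 1) := hI3.add hI4
  have hI234 : IntegrableOn
      (fun x => ((a:ℝ) * bcoef (a-1) γ)
        * ((Pmon γ (a-2)).eval x * (Pmon γ b).eval x * (1-x^2) ^ (γ-1/2))
        + (((b:ℝ) * bcoef (b-1) γ)
        * ((Pmon γ a).eval x * (Pmon γ (b-2)).eval x * (1-x^2) ^ (γ-1/2))
        + ((a:ℝ) * bcoef (a-1) γ) * ((b:ℝ) * bcoef (b-1) γ)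
        * ((Pmon γ (a-2)).eval x * (Pmon γ (b-2)).eval x * (1-x^2) ^ (γ-1/2))))
      (Set.Ioc (-1:ℝ) 1) := hI2.add hI34
  rw [MeasureTheory.integral_add hI1 hI234, MeasureTheory.integral_add hI2 hI34,
    MeasureTheory.integral_add hI3 hI4]
  rw [MeasureTheory.integral_const_mul, MeasureTheory.integral_const_mul,
    MeasureTheory.integral_const_mul]
  rw [Pmon_orth hγ hγ0 h1]
  have hT2 : ((a:ℝ) * bcoef (a-1) γ)
      * (∫ x in Set.Ioc (-1:ℝ) 1,
        (Pmon γ (a-2)).eval x * (Pmon γ b).eval x * (1-x^2) ^ (γ-1/2)) = 0 := by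
    rcases le_or_gt 2 a with h' | h'
    · rw [Pmon_orth hγ hγ0 (h2 h'), mul_zero]
    · rw [qcoef_vanish (a := a) γ (by omega), zero_mul]
  have hT3 : ((b:ℝ) * bcoef (b-1) γ)
      * (∫ x in Set.Ioc (-1:ℝ) 1,
        (Pmon γ a).eval x * (Pmon γ (b-2)).eval x * (1-x^2) ^ (γ-1/2)) = 0 := by
    rcases le_or_gt 2 b with h' | h'
    · rw [Pmon_orth hγ hγ0 (h3 h'), mul_zero]
    · rw [qcoef_vanish (a := b) γ (by omega), zero_mul]
  have hT4 : ((a:ℝ) * bcoef (a-1) γ) * ((b:ℝ) * bcoef (b-1) γ)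
      * (∫ x in Set.Ioc (-1:ℝ) 1,
        (Pmon γ (a-2)).eval x * (Pmon γ (b-2)).eval x * (1-x^2) ^ (γ-1/2)) = 0 := by
    rcases le_or_gt 2 a with h' | h'
    · rcases le_or_gt 2 b with h'' | h''
      · rw [Pmon_orth hγ hγ0 (h4 h' h''), mul_zero]
      · rw [qcoef_vanish (a := b) γ (by omega), mul_zero, zero_mul]
    · rw [qcoef_vanish (a := a) γ (by omega), zero_mul, zero_mul]
  rw [hT2, hT3, hT4]
  norm_num

lemma gegGrad_zero_left {α β : ℝ} {f g : ℝ → ℝ → ℝ} (hf : ∀ x y, f x y = 0) :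
    gegGrad α β f g = 0 := by
  rw [gegGrad]
  have h0 : ∀ p : ℝ × ℝ,
      (deriv (fun t => f t p.2) p.1 * deriv (fun t => g t p.2) p.1 +
        deriv (fun t => f p.1 t) p.2 * deriv (fun t => g p.1 t) p.2) *
      (Real.rpow (1 - p.1 ^ 2) (α - 1 / 2) * Real.rpow (1 - p.2 ^ 2) (β - 1 / 2)) = 0 := by
    intro p
    have e1 : (fun t => f t p.2) = fun _ => (0:ℝ) := funext fun t => hf t p.2
    have e2 : (fun t => f p.1 t) = fun _ => (0:ℝ) := funext fun t => hf p.1 t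
    rw [e1, e2]
    simp
  rw [MeasureTheory.integral_congr_ae (Filter.Eventually.of_forall h0)]
  simp

lemma gegGrad_factor {α β : ℝ} (hα : -(1/2:ℝ) < α) (hα0 : α ≠ 0)
    (hβ : -(1/2:ℝ) < β) (hβ0 : β ≠ 0) (n i m l : ℕ) :
    gegGrad α β (gegQ2 α β n i) (gegQ2 α β m l)
      = (Real.Gamma (α + 1) * Real.Gamma (β + 1) /
          (Real.Gamma (α + 1/2) * Real.Gamma (β + 1/2) * Real.pi)) *
        ((∫ x in Set.Ioc (-1:ℝ) 1,
            deriv (gegQ α (n-i)) x * deriv (gegQ α (m-l)) x * (1 - x^2) ^ (α - 1/2))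
          * (∫ y in Set.Ioc (-1:ℝ) 1, gegQ β i y * gegQ β l y * (1 - y^2) ^ (β - 1/2))
        + (∫ x in Set.Ioc (-1:ℝ) 1,
            gegQ α (n-i) x * gegQ α (m-l) x * (1 - x^2) ^ (α - 1/2))
          * (∫ y in Set.Ioc (-1:ℝ) 1,
            deriv (gegQ β i) y * deriv (gegQ β l) y * (1 - y^2) ^ (β - 1/2))) := by
  rw [gegGrad]
  congr 1
  have hint : ∀ p : ℝ × ℝ,
      (deriv (fun t => gegQ2 α β n i t p.2) p.1 * deriv (fun t => gegQ2 α β m l t p.2) p.1 +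
        deriv (fun t => gegQ2 α β n i p.1 t) p.2 * deriv (fun t => gegQ2 α β m l p.1 t) p.2) *
      (Real.rpow (1 - p.1 ^ 2) (α - 1 / 2) * Real.rpow (1 - p.2 ^ 2) (β - 1 / 2))
      = (deriv (gegQ α (n-i)) p.1 * deriv (gegQ α (m-l)) p.1 * (1 - p.1^2) ^ (α - 1/2)) *
          (gegQ β i p.2 * gegQ β l p.2 * (1 - p.2^2) ^ (β - 1/2))
        + (gegQ α (n-i) p.1 * gegQ α (m-l) p.1 * (1 - p.1^2) ^ (α - 1/2)) *
          (deriv (gegQ β i) p.2 * deriv (gegQ β l) p.2 * (1 - p.2^2) ^ (β - 1/2)) := by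
    intro p
    have d1 : ∀ (a b : ℕ) (y : ℝ), deriv (fun t => gegQ2 α β a b t y) p.1
        = deriv (gegQ α (a-b)) p.1 * gegQ β b y := by
      intro a b y
      have e : (fun t => gegQ2 α β a b t y) = fun t => gegQ α (a-b) t * gegQ β b y := rfl
      rw [e, deriv_mul_const (gegQ_differentiableAt α (a-b) p.1)]
    have d2 : ∀ (a b : ℕ) (x : ℝ), deriv (fun t => gegQ2 α β a b x t) p.2
        = gegQ α (a-b) x * deriv (gegQ β b) p.2 := by
      intro a b x
      have e : (fun t => gegQ2 α β a b x t) = fun t => gegQ α (a-b) x * gegQ β b t := rfl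
      rw [e, deriv_const_mul _ (gegQ_differentiableAt β b p.2)]
    rw [d1, d1, d2, d2]
    show _ * ((1 - p.1 ^ 2) ^ (α - 1/2) * (1 - p.2 ^ 2) ^ (β - 1/2)) = _
    ring
  rw [MeasureTheory.integral_congr_ae (Filter.Eventually.of_forall hint)]
  rw [MeasureTheory.Measure.volume_eq_prod, ← MeasureTheory.Measure.prod_restrict]
  have hF1 : Integrable
      (fun x => deriv (gegQ α (n-i)) x * deriv (gegQ α (m-l)) x * (1 - x^2) ^ (α - 1/2))
      (volume.restrict (Set.Ioc (-1:ℝ) 1)) :=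
    wInt2 (by linarith) (deriv_gegQ_continuous hα hα0 _) (deriv_gegQ_continuous hα hα0 _)
  have hG1 : Integrable
      (fun y => gegQ β i y * gegQ β l y * (1 - y^2) ^ (β - 1/2))
      (volume.restrict (Set.Ioc (-1:ℝ) 1)) :=
    wInt2 (by linarith) (gegQ_continuous β i) (gegQ_continuous β l)
  have hF2 : Integrable
      (fun x => gegQ α (n-i) x * gegQ α (m-l) x * (1 - x^2) ^ (α - 1/2))
      (volume.restrict (Set.Ioc (-1:ℝ) 1)) :=
    wInt2 (by linarith) (gegQ_continuous α _) (gegQ_continuous α _)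
  have hG2 : Integrable
      (fun y => deriv (gegQ β i) y * deriv (gegQ β l) y * (1 - y^2) ^ (β - 1/2))
      (volume.restrict (Set.Ioc (-1:ℝ) 1)) :=
    wInt2 (by linarith) (deriv_gegQ_continuous hβ hβ0 _) (deriv_gegQ_continuous hβ hβ0 _)
  rw [MeasureTheory.integral_add (hF1.mul_prod hG1) (hF2.mul_prod hG2)]
  rw [MeasureTheory.integral_prod_mul
      (f := fun x => deriv (gegQ α (n-i)) x * deriv (gegQ α (m-l)) x * (1 - x^2) ^ (α - 1/2))
      (g := fun y => gegQ β i y * gegQ β l y * (1 - y^2) ^ (β - 1/2)),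
    MeasureTheory.integral_prod_mul
      (f := fun x => gegQ α (n-i) x * gegQ α (m-l) x * (1 - x^2) ^ (α - 1/2))
      (g := fun y => deriv (gegQ β i) y * deriv (gegQ β l) y * (1 - y^2) ^ (β - 1/2))]

/-- For the product Gegenbauer weight, `⟨Q_i^n, Q_l^m⟩_∇ = 0` whenever `n - m` is odd or
`|n - m| ≥ 3`; in particular `⟨Q_0^n, Q_l^m⟩_∇ = 0` and `⟨Q_n^n, Q_l^m⟩_∇ = 0` for `m < n`. -/
theorem gegGrad_far_orthogonal (α β : ℝ) (hα : -(1 / 2 : ℝ) < α) (hβ : -(1 / 2 : ℝ) < β) :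
    (∀ n m i l : ℕ, i ≤ n → l ≤ m → (Odd ((n : ℤ) - m) ∨ 3 ≤ |(n : ℤ) - m|) →
      gegGrad α β (gegQ2 α β n i) (gegQ2 α β m l) = 0) ∧
    (∀ n m l : ℕ, l ≤ m → m < n →
      gegGrad α β (gegQ2 α β n 0) (gegQ2 α β m l) = 0 ∧
      gegGrad α β (gegQ2 α β n n) (gegQ2 α β m l) = 0) := by
  by_cases hα0 : α = 0
  · subst hα0
    refine ⟨fun n m i l _ _ _ => ?_, fun n m l _ _ => ⟨?_, ?_⟩⟩ <;>
      exact gegGrad_zero_left (fun x y => by simp [gegQ2, gegQ_zero_param])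
  by_cases hβ0 : β = 0
  · subst hβ0
    refine ⟨fun n m i l _ _ _ => ?_, fun n m l _ _ => ⟨?_, ?_⟩⟩ <;>
      exact gegGrad_zero_left (fun x y => by simp [gegQ2, gegQ_zero_param])
  have main : ∀ n m i l : ℕ,
      ((n-i ≠ m-l ∨ n-i = 0 ∨ m-l = 0) ∨ (Odd ((i:ℤ)-(l:ℤ)) ∨ 3 ≤ |(i:ℤ)-(l:ℤ)|)) →
      ((i ≠ l ∨ i = 0 ∨ l = 0) ∨
        (Odd (((n-i:ℕ):ℤ)-((m-l:ℕ):ℤ)) ∨ 3 ≤ |((n-i:ℕ):ℤ)-((m-l:ℕ):ℤ)|)) →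
      gegGrad α β (gegQ2 α β n i) (gegQ2 α β m l) = 0 := by
    intro n m i l hX hY
    rw [gegGrad_factor hα hα0 hβ hβ0]
    have hXzero : (∫ x in Set.Ioc (-1:ℝ) 1,
          deriv (gegQ α (n-i)) x * deriv (gegQ α (m-l)) x * (1 - x^2) ^ (α - 1/2))
        * (∫ y in Set.Ioc (-1:ℝ) 1, gegQ β i y * gegQ β l y * (1 - y^2) ^ (β - 1/2)) = 0 := by
      rcases hX with h | h
      · rw [deriv_orth hα hα0 h, zero_mul]
      · rw [gegQ_orth hβ hβ0 h, mul_zero]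
    have hYzero : (∫ x in Set.Ioc (-1:ℝ) 1,
          gegQ α (n-i) x * gegQ α (m-l) x * (1 - x^2) ^ (α - 1/2))
        * (∫ y in Set.Ioc (-1:ℝ) 1,
          deriv (gegQ β i) y * deriv (gegQ β l) y * (1 - y^2) ^ (β - 1/2)) = 0 := by
      rcases hY with h | h
      · rw [deriv_orth hβ hβ0 h, mul_zero]
      · rw [gegQ_orth hα hα0 h, zero_mul]
    rw [hXzero, hYzero, add_zero, mul_zero]
  constructor
  · intro n m i l hin hlm hcond
    apply main
    · by_cases hnm : n - i = m - l
      · right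
        have e : (i:ℤ) - (l:ℤ) = (n:ℤ) - (m:ℤ) := by omega
        rw [e]; exact hcond
      · left; left; exact hnm
    · by_cases hil : i = l
      · right
        have e : ((n-i:ℕ):ℤ) - ((m-l:ℕ):ℤ) = (n:ℤ) - (m:ℤ) := by omega
        rw [e]; exact hcond
      · left; left; exact hil
  · intro n m l hlm hmn
    constructor
    · apply main
      · left; left; omega
      · left; right; left; rfl
    · apply main
      · left; right; left; omega
      · left; left; omega
end

section
/- For the product Laguerre weight with α = β = 0, the monic Sobolev-type orthogonal polynomials S_k^n for the gradient form ⟨·,·⟩_∇ satisfy the symmetry S_{n-k}^n(x,y) = S_k^n(y,x) for 0 ≤ k ≤ n; in particular S_0^2(x,y) = x(x-2), S_1^2(x,y) = xy - x - y, S_0^3(x,y) = x(x² - 6x + 6), and S_1^3(x,y) = x²y - x² - 3xy + 3x + y are mutually ∇-orthogonal and orthogonal to all polynomials of lower degree. -/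
open MeasureTheory MvPolynomial

/-- The gradient bilinear form for the product Laguerre weight with `α = β = 0`:
`⟨f,g⟩_∇ = ∬_{[0,∞)²} ∇f·∇g e^{-x-y} dx dy`. -/
noncomputable def grad00 (f g : ℝ → ℝ → ℝ) : ℝ :=
  ∫ p in (Set.Ioi (0 : ℝ)) ×ˢ (Set.Ioi (0 : ℝ)),
    (deriv (fun t => f t p.2) p.1 * deriv (fun t => g t p.2) p.1 +
      deriv (fun t => f p.1 t) p.2 * deriv (fun t => g p.1 t) p.2) *
    Real.exp (-p.1 - p.2)

/-- Evaluation of a bivariate polynomial as a function of two real variables. -/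
noncomputable def pev (P : MvPolynomial (Fin 2) ℝ) (x y : ℝ) : ℝ :=
  MvPolynomial.eval ![x, y] P

/-- `P` is a monic Sobolev-type orthogonal polynomial `S_k^n`: it has leading term
`x^{n-k} y^k` and is `∇`-orthogonal to all polynomials of total degree `≤ n-1`. -/
def IsSob (n k : ℕ) (P : MvPolynomial (Fin 2) ℝ) : Prop :=
  (P - X 0 ^ (n - k) * X 1 ^ k).totalDegree < n ∧
  ∀ Q : MvPolynomial (Fin 2) ℝ, Q.totalDegree < n → grad00 (pev P) (pev Q) = 0


noncomputable abbrev R2 : Set (ℝ × ℝ) := (Set.Ioi (0:ℝ)) ×ˢ (Set.Ioi (0:ℝ))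

lemma moment_int (n : ℕ) : IntegrableOn (fun x : ℝ => x ^ n * Real.exp (-x)) (Set.Ioi 0) := by
  have h := Real.GammaIntegral_convergent (s := (n:ℝ)+1) (by positivity)
  have : (fun x : ℝ => Real.exp (-x) * x ^ ((n:ℝ)+1-1)) = fun x : ℝ => x ^ n * Real.exp (-x) := by
    funext x
    rw [add_sub_cancel_right, Real.rpow_natCast, mul_comm]
  rwa [this] at h

lemma moment (n : ℕ) : ∫ x in Set.Ioi (0:ℝ), x ^ n * Real.exp (-x) = n.factorial := by
  have h := Real.Gamma_eq_integral (s := (n:ℝ)+1) (by positivity)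
  rw [Real.Gamma_nat_eq_factorial] at h
  rw [h]
  apply integral_congr_ae
  filter_upwards with x
  rw [add_sub_cancel_right, Real.rpow_natCast, mul_comm]

lemma int_sep {f g : ℝ → ℝ} (hf : IntegrableOn f (Set.Ioi 0)) (hg : IntegrableOn g (Set.Ioi 0)) :
    IntegrableOn (fun p : ℝ × ℝ => f p.1 * g p.2) R2 := by
  rw [IntegrableOn, Measure.volume_eq_prod, ← Measure.prod_restrict]
  exact hf.mul_prod hg

lemma integral_sep (f g : ℝ → ℝ) :
    ∫ p in R2, f p.1 * g p.2 = (∫ x in Set.Ioi (0:ℝ), f x) * ∫ y in Set.Ioi (0:ℝ), g y := by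
  rw [Measure.volume_eq_prod, ← Measure.prod_restrict]
  exact integral_prod_mul f g

lemma pev_monomial (m : Fin 2 →₀ ℕ) (c : ℝ) (x y : ℝ) :
    pev (monomial m c) x y = c * (x ^ m 0 * y ^ m 1) := by
  rw [pev, eval_monomial, Finsupp.prod_fintype _ _ (fun i => pow_zero _), Fin.prod_univ_two]
  simp

set_option linter.unnecessarySeqFocus false in
lemma hasDerivAt_pev_fst (P : MvPolynomial (Fin 2) ℝ) (x y : ℝ) :
    HasDerivAt (fun t => pev P t y) (pev (pderiv 0 P) x y) x := by
  induction P using MvPolynomial.induction_on with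
  | C a => simpa [pev] using hasDerivAt_const x a
  | add p q hp hq => simpa [pev, eval_add] using hp.fun_add hq
  | mul_X p i hp =>
    fin_cases i
    · have := hp.mul (hasDerivAt_id x)
      simp only [pev, map_mul, pderiv_X_self, eval_mul, eval_X, Derivation.leibniz, pderiv_X,
        Pi.single_eq_same, smul_eq_mul] at *
      convert this using 1 <;> (try rfl) <;> simp [Matrix.cons_val_zero, Fin.mk_one, Fin.zero_eta, Derivation.leibniz, pderiv_X] <;> ring
    · have := hp.mul_const y
      simp only [pev, eval_mul, eval_X] at *
      convert this using 1 <;> (try rfl) <;> simp [Derivation.leibniz, pderiv_X, Fin.mk_one, Fin.zero_eta] <;> ring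

set_option linter.unnecessarySeqFocus false in
lemma hasDerivAt_pev_snd (P : MvPolynomial (Fin 2) ℝ) (x y : ℝ) :
    HasDerivAt (fun t => pev P x t) (pev (pderiv 1 P) x y) y := by
  induction P using MvPolynomial.induction_on with
  | C a => simpa [pev] using hasDerivAt_const y a
  | add p q hp hq => simpa [pev, eval_add] using hp.fun_add hq
  | mul_X p i hp =>
    fin_cases i
    · have := hp.mul_const x
      simp only [pev, eval_mul, eval_X] at *
      convert this using 1 <;> (try rfl) <;> simp [Derivation.leibniz, pderiv_X, Fin.mk_one, Fin.zero_eta] <;> ring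
    · have := hp.mul (hasDerivAt_id y)
      simp only [pev, eval_mul, eval_X] at *
      convert this using 1 <;> (try rfl) <;> simp [Derivation.leibniz, pderiv_X, Fin.mk_one, Fin.zero_eta] <;> ring

lemma exp_split (x y : ℝ) : Real.exp (-x - y) = Real.exp (-x) * Real.exp (-y) := by
  rw [show -x - y = -x + -y by ring, Real.exp_add]

lemma int_pev_monomial (m : Fin 2 →₀ ℕ) (c : ℝ) :
    IntegrableOn (fun p : ℝ × ℝ => pev (monomial m c) p.1 p.2 * Real.exp (-p.1 - p.2)) R2 := by
  have h : (fun p : ℝ × ℝ => pev (monomial m c) p.1 p.2 * Real.exp (-p.1 - p.2))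
      = fun p : ℝ × ℝ => (c * p.1 ^ m 0 * Real.exp (-p.1)) * (p.2 ^ m 1 * Real.exp (-p.2)) := by
    funext p; rw [pev_monomial, exp_split]; ring
  rw [h]
  have h1 : IntegrableOn (fun x : ℝ => c * x ^ m 0 * Real.exp (-x)) (Set.Ioi 0) := by
    simpa [mul_assoc, IntegrableOn] using ((moment_int (m 0)).const_mul c)
  exact int_sep (f := fun x : ℝ => c * x ^ m 0 * Real.exp (-x))
    (g := fun y : ℝ => y ^ m 1 * Real.exp (-y)) h1 (moment_int (m 1))

lemma pev_sum {ι : Type*} (s : Finset ι) (f : ι → MvPolynomial (Fin 2) ℝ) (x y : ℝ) :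
    pev (∑ i ∈ s, f i) x y = ∑ i ∈ s, pev (f i) x y := by
  simp [pev]

lemma int_pev (R : MvPolynomial (Fin 2) ℝ) :
    IntegrableOn (fun p : ℝ × ℝ => pev R p.1 p.2 * Real.exp (-p.1 - p.2)) R2 := by
  have h : (fun p : ℝ × ℝ => pev R p.1 p.2 * Real.exp (-p.1 - p.2))
      = fun p : ℝ × ℝ => ∑ m ∈ R.support, pev (monomial m (coeff m R)) p.1 p.2 * Real.exp (-p.1 - p.2) := by
    funext p
    rw [← Finset.sum_mul, ← pev_sum, ← as_sum]
  rw [h]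
  exact integrable_finset_sum _ fun m _ => int_pev_monomial m (coeff m R)

/-- the moment functional -/
noncomputable def Lf (R : MvPolynomial (Fin 2) ℝ) : ℝ :=
  ∫ p in R2, pev R p.1 p.2 * Real.exp (-p.1 - p.2)

lemma Lf_monomial (m : Fin 2 →₀ ℕ) (c : ℝ) :
    Lf (monomial m c) = c * ((m 0).factorial * (m 1).factorial) := by
  rw [Lf]
  have h : (fun p : ℝ × ℝ => pev (monomial m c) p.1 p.2 * Real.exp (-p.1 - p.2))
      = fun p : ℝ × ℝ => (c * p.1 ^ m 0 * Real.exp (-p.1)) * (p.2 ^ m 1 * Real.exp (-p.2)) := by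
    funext p; rw [pev_monomial, exp_split]; ring
  rw [h, integral_sep (fun x => c * x ^ m 0 * Real.exp (-x)) (fun y => y ^ m 1 * Real.exp (-y))]
  have h0 : ∫ x in Set.Ioi (0:ℝ), c * x ^ m 0 * Real.exp (-x) = c * (m 0).factorial := by
    rw [← moment (m 0), ← integral_const_mul]
    congr 1; funext x; ring
  rw [h0, moment]; ring

lemma Lf_add (p q : MvPolynomial (Fin 2) ℝ) : Lf (p + q) = Lf p + Lf q := by
  rw [Lf, Lf, Lf, ← integral_add (int_pev p) (int_pev q)]
  congr 1; funext x; simp [pev]; ring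

lemma Lf_zero : Lf 0 = 0 := by simp [Lf, pev]

lemma Lf_sum {ι : Type*} (s : Finset ι) (f : ι → MvPolynomial (Fin 2) ℝ) :
    Lf (∑ i ∈ s, f i) = ∑ i ∈ s, Lf (f i) := by
  classical
  induction s using Finset.induction_on with
  | empty => simp [Lf_zero]
  | insert _ _ h ih => rw [Finset.sum_insert h, Finset.sum_insert h, Lf_add, ih]

lemma Lf_rename (R : MvPolynomial (Fin 2) ℝ) :
    Lf (rename (Equiv.swap (0 : Fin 2) 1) R) = Lf R := by
  conv_lhs => rw [as_sum R]
  rw [map_sum, Lf_sum]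
  conv_rhs => rw [as_sum R, Lf_sum]
  refine Finset.sum_congr rfl fun m _ => ?_
  rw [rename_monomial, Lf_monomial, Lf_monomial]
  rw [Finsupp.mapDomain_equiv_apply, Finsupp.mapDomain_equiv_apply]
  simp [Equiv.symm_swap, Equiv.swap_apply_left, Equiv.swap_apply_right, mul_comm]

lemma grad00_pev (P Q : MvPolynomial (Fin 2) ℝ) :
    grad00 (pev P) (pev Q)
      = Lf (pderiv 0 P * pderiv 0 Q + pderiv 1 P * pderiv 1 Q) := by
  rw [grad00, Lf]
  congr 1
  funext p
  rw [(hasDerivAt_pev_fst P p.1 p.2).deriv, (hasDerivAt_pev_fst Q p.1 p.2).deriv,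
    (hasDerivAt_pev_snd P p.1 p.2).deriv, (hasDerivAt_pev_snd Q p.1 p.2).deriv]
  simp only [pev, eval_add, eval_mul]

lemma grad00_comm (f g : ℝ → ℝ → ℝ) : grad00 f g = grad00 g f := by
  rw [grad00, grad00]; congr 1; funext p; ring

lemma grad00_swap (P Q : MvPolynomial (Fin 2) ℝ) :
    grad00 (pev (rename (Equiv.swap (0 : Fin 2) 1) P)) (pev Q)
      = grad00 (pev P) (pev (rename (Equiv.swap (0 : Fin 2) 1) Q)) := by
  set σ : Fin 2 ≃ Fin 2 := Equiv.swap 0 1 with hσ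
  have hinj : Function.Injective (⇑σ) := σ.injective
  have h0 : σ 1 = 0 := Equiv.swap_apply_right 0 1
  have h1 : σ 0 = 1 := Equiv.swap_apply_left 0 1
  have hp0 : pderiv (0 : Fin 2) (rename (⇑σ) P) = rename (⇑σ) (pderiv 1 P) := by
    rw [← h0, pderiv_rename hinj]
  have hp1 : pderiv (1 : Fin 2) (rename (⇑σ) P) = rename (⇑σ) (pderiv 0 P) := by
    rw [← h1, pderiv_rename hinj]
  have hq0 : pderiv (0 : Fin 2) (rename (⇑σ) Q) = rename (⇑σ) (pderiv 1 Q) := by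
    rw [← h0, pderiv_rename hinj]
  have hq1 : pderiv (1 : Fin 2) (rename (⇑σ) Q) = rename (⇑σ) (pderiv 0 Q) := by
    rw [← h1, pderiv_rename hinj]
  have hσσ : ∀ R : MvPolynomial (Fin 2) ℝ, rename (⇑σ) (rename (⇑σ) R) = R := by
    intro R
    rw [rename_rename]
    have : (⇑σ ∘ ⇑σ) = id := by
      funext i; simp [hσ, Equiv.swap_apply_self]
    rw [this, rename_id, AlgHom.id_apply]
  rw [grad00_pev, grad00_pev, hp0, hp1, hq0, hq1]
  rw [← Lf_rename (pderiv 0 P * rename (⇑σ) (pderiv 1 Q) + pderiv 1 P * rename (⇑σ) (pderiv 0 Q))]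
  rw [map_add, map_mul, map_mul, hσσ, hσσ]
  simp only [hσ]
  ring_nf

lemma fdeg (m : Fin 2 →₀ ℕ) : (m.sum fun _ e => e) = m 0 + m 1 := by
  rw [Finsupp.sum_fintype _ _ (fun i => rfl), Fin.sum_univ_two]

lemma ortho_red (P : MvPolynomial (Fin 2) ℝ) (n : ℕ)
    (h : ∀ (a b : ℕ) (c : ℝ), a + b < n →
      Lf (pderiv 0 P * pderiv 0 (monomial (Finsupp.single 0 a + Finsupp.single 1 b) c)
        + pderiv 1 P * pderiv 1 (monomial (Finsupp.single 0 a + Finsupp.single 1 b) c)) = 0) :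
    ∀ Q : MvPolynomial (Fin 2) ℝ, Q.totalDegree < n → grad00 (pev P) (pev Q) = 0 := by
  intro Q hQ
  rw [grad00_pev]
  have hsum : pderiv 0 P * pderiv 0 Q + pderiv 1 P * pderiv 1 Q
      = ∑ m ∈ Q.support, (pderiv 0 P * pderiv 0 (monomial m (coeff m Q))
        + pderiv 1 P * pderiv 1 (monomial m (coeff m Q))) := by
    conv_lhs => rw [as_sum Q]
    rw [map_sum, map_sum, Finset.mul_sum, Finset.mul_sum, Finset.sum_add_distrib]
  rw [hsum, Lf_sum]
  apply Finset.sum_eq_zero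
  intro m hm
  have hdeg : m 0 + m 1 < n := by
    rw [← fdeg m]
    exact lt_of_le_of_lt (MvPolynomial.le_totalDegree hm) hQ
  have hmeq : m = Finsupp.single 0 (m 0) + Finsupp.single 1 (m 1) := by
    ext i; fin_cases i <;> simp [Finsupp.single_apply]
  have := h (m 0) (m 1) (coeff m Q) hdeg
  rwa [← hmeq] at this

/-- exponent finsupp of a bivariate monomial -/
noncomputable def sab (a b : ℕ) : Fin 2 →₀ ℕ := Finsupp.single 0 a + Finsupp.single 1 b

lemma sab_apply0 (a b : ℕ) : sab a b 0 = a := by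
  simp [sab, Finsupp.add_apply, Finsupp.single_apply]

lemma sab_apply1 (a b : ℕ) : sab a b 1 = b := by
  simp [sab, Finsupp.add_apply, Finsupp.single_apply]

lemma sab_add (a b a' b' : ℕ) : sab a b + sab a' b' = sab (a + a') (b + b') := by
  ext i
  fin_cases i <;> simp [Finsupp.add_apply, sab_apply0, sab_apply1]

lemma sab_sub0 (a b : ℕ) : sab a b - Finsupp.single 0 1 = sab (a - 1) b := by
  ext i
  fin_cases i <;>
    simp [Finsupp.tsub_apply, sab_apply0, sab_apply1, Finsupp.single_apply]

lemma sab_sub1 (a b : ℕ) : sab a b - Finsupp.single 1 1 = sab a (b - 1) := by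
  ext i
  fin_cases i <;>
    simp [Finsupp.tsub_apply, sab_apply0, sab_apply1, Finsupp.single_apply]

/-- shorthand for a bivariate monomial -/
noncomputable def M (a b : ℕ) (c : ℝ) : MvPolynomial (Fin 2) ℝ :=
  monomial (sab a b) c

lemma M_eq (a b : ℕ) (c : ℝ) : M a b c = C c * X 0 ^ a * X 1 ^ b := by
  rw [M, monomial_eq, Finsupp.prod_fintype _ _ (fun i => pow_zero _), Fin.prod_univ_two,
    sab_apply0, sab_apply1, mul_assoc]

lemma pd0_M (a b : ℕ) (c : ℝ) : pderiv 0 (M a b c) = M (a - 1) b (c * a) := by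
  rw [M, M, pderiv_monomial, sab_apply0]
  rw [show (sab a b - fun₀ | (0 : Fin 2) => 1) = sab (a - 1) b from sab_sub0 a b]

lemma pd1_M (a b : ℕ) (c : ℝ) : pderiv 1 (M a b c) = M a (b - 1) (c * b) := by
  rw [M, M, pderiv_monomial, sab_apply1]
  rw [show (sab a b - fun₀ | (1 : Fin 2) => 1) = sab a (b - 1) from sab_sub1 a b]

lemma M_mul (a b a' b' : ℕ) (c c' : ℝ) : M a b c * M a' b' c' = M (a + a') (b + b') (c * c') := by
  rw [M, M, M, monomial_mul, sab_add]

lemma Lf_M (a b : ℕ) (c : ℝ) : Lf (M a b c) = c * (a.factorial * b.factorial) := by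
  rw [M, Lf_monomial, sab_apply0, sab_apply1]

lemma M_zero (a b : ℕ) : M a b 0 = 0 := by
  rw [M, monomial_zero]

lemma deg_M (a b : ℕ) (c : ℝ) : (M a b c).totalDegree ≤ a + b := by
  refine (totalDegree_monomial_le _ _).trans ?_
  rw [Finsupp.sum_fintype _ _ (fun i => rfl), Fin.sum_univ_two, sab_apply0, sab_apply1]
  simp

lemma M_mono (a b : ℕ) (c : ℝ) :
    monomial (Finsupp.single 0 a + Finsupp.single 1 b) c = M a b c := rfl

lemma S02_eq : (X 0 ^ 2 - C 2 * X 0 : MvPolynomial (Fin 2) ℝ) = M 2 0 1 + M 1 0 (-2) := by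
  rw [M_eq, M_eq]; simp only [map_neg, map_one]; ring

lemma S12_eq : (X 0 * X 1 - X 0 - X 1 : MvPolynomial (Fin 2) ℝ)
    = M 1 1 1 + M 1 0 (-1) + M 0 1 (-1) := by
  rw [M_eq, M_eq, M_eq]; simp only [map_neg, map_one]; ring

lemma S03_eq : (X 0 ^ 3 - C 6 * X 0 ^ 2 + C 6 * X 0 : MvPolynomial (Fin 2) ℝ)
    = M 3 0 1 + M 2 0 (-6) + M 1 0 6 := by
  rw [M_eq, M_eq, M_eq]; simp only [map_neg, map_one]; ring

lemma S13_eq : (X 0 ^ 2 * X 1 - X 0 ^ 2 - C 3 * (X 0 * X 1) + C 3 * X 0 + X 1 :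
      MvPolynomial (Fin 2) ℝ)
    = M 2 1 1 + M 2 0 (-1) + M 1 1 (-3) + M 1 0 3 + M 0 1 1 := by
  rw [M_eq, M_eq, M_eq, M_eq, M_eq]; simp only [map_neg, map_one]; ring

lemma S02_ortho : ∀ Q : MvPolynomial (Fin 2) ℝ, Q.totalDegree < 2 →
    grad00 (pev (X 0 ^ 2 - C 2 * X 0)) (pev Q) = 0 := by
  apply ortho_red
  intro a b c h
  rw [M_mono, S02_eq]
  have ha : a ≤ 1 := by omega
  have hb : b ≤ 1 := by omega
  interval_cases a <;> interval_cases b <;>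
    first
      | exact absurd h (by omega)
      | (simp [map_add, pd0_M, pd1_M, M_mul, mul_add, add_mul, Lf_add, Lf_M, M_zero, Lf_zero,
          Nat.factorial]
         try ring)

lemma S12_ortho : ∀ Q : MvPolynomial (Fin 2) ℝ, Q.totalDegree < 2 →
    grad00 (pev (X 0 * X 1 - X 0 - X 1)) (pev Q) = 0 := by
  apply ortho_red
  intro a b c h
  rw [M_mono, S12_eq]
  have ha : a ≤ 1 := by omega
  have hb : b ≤ 1 := by omega
  interval_cases a <;> interval_cases b <;>
    first
      | exact absurd h (by omega)
      | (simp [map_add, pd0_M, pd1_M, M_mul, mul_add, add_mul, Lf_add, Lf_M, M_zero, Lf_zero,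
          Nat.factorial]
         try ring)

lemma S03_ortho : ∀ Q : MvPolynomial (Fin 2) ℝ, Q.totalDegree < 3 →
    grad00 (pev (X 0 ^ 3 - C 6 * X 0 ^ 2 + C 6 * X 0)) (pev Q) = 0 := by
  apply ortho_red
  intro a b c h
  rw [M_mono, S03_eq]
  have ha : a ≤ 2 := by omega
  have hb : b ≤ 2 := by omega
  interval_cases a <;> interval_cases b <;>
    first
      | exact absurd h (by omega)
      | (simp [map_add, pd0_M, pd1_M, M_mul, mul_add, add_mul, Lf_add, Lf_M, M_zero, Lf_zero,
          Nat.factorial]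
         try ring)

lemma S13_ortho : ∀ Q : MvPolynomial (Fin 2) ℝ, Q.totalDegree < 3 →
    grad00 (pev (X 0 ^ 2 * X 1 - X 0 ^ 2 - C 3 * (X 0 * X 1) + C 3 * X 0 + X 1)) (pev Q) = 0 := by
  apply ortho_red
  intro a b c h
  rw [M_mono, S13_eq]
  have ha : a ≤ 2 := by omega
  have hb : b ≤ 2 := by omega
  interval_cases a <;> interval_cases b <;>
    first
      | exact absurd h (by omega)
      | (simp [map_add, pd0_M, pd1_M, M_mul, mul_add, add_mul, Lf_add, Lf_M, M_zero, Lf_zero,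
          Nat.factorial]
         try ring)

lemma dadd {p q : MvPolynomial (Fin 2) ℝ} {n : ℕ} (hp : p.totalDegree ≤ n)
    (hq : q.totalDegree ≤ n) : (p + q).totalDegree ≤ n :=
  (totalDegree_add _ _).trans (max_le hp hq)

lemma deg_M_le (a b d : ℕ) (h : a + b ≤ d) (c : ℝ) : (M a b c).totalDegree ≤ d :=
  (deg_M a b c).trans h

lemma deg_S02 : (X 0 ^ 2 - C 2 * X 0 : MvPolynomial (Fin 2) ℝ).totalDegree ≤ 2 := by
  rw [S02_eq]
  exact dadd (deg_M_le 2 0 2 (by norm_num) 1) (deg_M_le 1 0 2 (by norm_num) (-2))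

lemma deg_S12 : (X 0 * X 1 - X 0 - X 1 : MvPolynomial (Fin 2) ℝ).totalDegree ≤ 2 := by
  rw [S12_eq]
  exact dadd (dadd (deg_M_le 1 1 2 (by norm_num) 1) (deg_M_le 1 0 2 (by norm_num) (-1)))
    (deg_M_le 0 1 2 (by norm_num) (-1))

lemma pair_S02_S12 :
    grad00 (pev (X 0 ^ 2 - C 2 * X 0)) (pev (X 0 * X 1 - X 0 - X 1)) = 0 := by
  rw [grad00_pev, S02_eq, S12_eq]
  simp [map_add, pd0_M, pd1_M, M_mul, mul_add, add_mul, Lf_add, Lf_M, M_zero, Lf_zero,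
    Nat.factorial]
  try ring

lemma pair_S03_S13 :
    grad00 (pev (X 0 ^ 3 - C 6 * X 0 ^ 2 + C 6 * X 0))
      (pev (X 0 ^ 2 * X 1 - X 0 ^ 2 - C 3 * (X 0 * X 1) + C 3 * X 0 + X 1)) = 0 := by
  rw [grad00_pev, S03_eq, S13_eq]
  simp [map_add, pd0_M, pd1_M, M_mul, mul_add, add_mul, Lf_add, Lf_M, M_zero, Lf_zero,
    Nat.factorial]
  try ring

lemma isSob_20 : IsSob 2 0 (X 0 ^ 2 - C 2 * X 0) := by
  constructor
  · have h : (X 0 ^ 2 - C 2 * X 0 : MvPolynomial (Fin 2) ℝ) - X 0 ^ (2 - 0) * X 1 ^ 0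
        = M 1 0 (-2) := by
      rw [M_eq]; simp only [map_neg, map_one]; ring
    rw [h]
    exact lt_of_le_of_lt (deg_M_le 1 0 1 (by norm_num) (-2)) (by norm_num)
  · exact S02_ortho

lemma isSob_21 : IsSob 2 1 (X 0 * X 1 - X 0 - X 1) := by
  constructor
  · have h : (X 0 * X 1 - X 0 - X 1 : MvPolynomial (Fin 2) ℝ) - X 0 ^ (2 - 1) * X 1 ^ 1
        = M 1 0 (-1) + M 0 1 (-1) := by
      rw [M_eq, M_eq]; simp only [map_neg, map_one]; ring
    rw [h]
    exact lt_of_le_of_lt (dadd (deg_M_le 1 0 1 (by norm_num) (-1))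
      (deg_M_le 0 1 1 (by norm_num) (-1))) (by norm_num)
  · exact S12_ortho

lemma isSob_30 : IsSob 3 0 (X 0 ^ 3 - C 6 * X 0 ^ 2 + C 6 * X 0) := by
  constructor
  · have h : (X 0 ^ 3 - C 6 * X 0 ^ 2 + C 6 * X 0 : MvPolynomial (Fin 2) ℝ)
        - X 0 ^ (3 - 0) * X 1 ^ 0 = M 2 0 (-6) + M 1 0 6 := by
      rw [M_eq, M_eq]; simp only [map_neg, map_one]; ring
    rw [h]
    exact lt_of_le_of_lt (dadd (deg_M_le 2 0 2 (by norm_num) (-6))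
      (deg_M_le 1 0 2 (by norm_num) 6)) (by norm_num)
  · exact S03_ortho

lemma isSob_31 : IsSob 3 1 (X 0 ^ 2 * X 1 - X 0 ^ 2 - C 3 * (X 0 * X 1) + C 3 * X 0 + X 1) := by
  constructor
  · have h : (X 0 ^ 2 * X 1 - X 0 ^ 2 - C 3 * (X 0 * X 1) + C 3 * X 0 + X 1 :
          MvPolynomial (Fin 2) ℝ) - X 0 ^ (3 - 1) * X 1 ^ 1
        = M 2 0 (-1) + M 1 1 (-3) + M 1 0 3 + M 0 1 1 := by
      rw [M_eq, M_eq, M_eq, M_eq]; simp only [map_neg, map_one]; ring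
    rw [h]
    exact lt_of_le_of_lt
      (dadd (dadd (dadd (deg_M_le 2 0 2 (by norm_num) (-1)) (deg_M_le 1 1 2 (by norm_num) (-3)))
        (deg_M_le 1 0 2 (by norm_num) 3)) (deg_M_le 0 1 2 (by norm_num) 1)) (by norm_num)
  · exact S13_ortho

/-- For `α = β = 0`, the monic Sobolev-type orthogonal polynomials satisfy the symmetry
`S_{n-k}^n(x,y) = S_k^n(y,x)`; in particular `S_0^2 = x(x-2)`, `S_1^2 = xy - x - y`,
`S_0^3 = x(x²-6x+6)` and `S_1^3 = x²y - x² - 3xy + 3x + y` are `∇`-orthogonal to all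
polynomials of lower degree, and mutually `∇`-orthogonal. -/
theorem laguerre_sobolev_symmetric :
    -- symmetry: swapping the variables of an `S_k^n` yields an `S_{n-k}^n`
    (∀ n k : ℕ, k ≤ n → ∀ P : MvPolynomial (Fin 2) ℝ, IsSob n k P →
      IsSob n (n - k) (MvPolynomial.rename (Equiv.swap (0 : Fin 2) 1) P)) ∧
    -- the explicit low-degree Sobolev orthogonal polynomials
    IsSob 2 0 (X 0 ^ 2 - C 2 * X 0) ∧
    IsSob 2 1 (X 0 * X 1 - X 0 - X 1) ∧
    IsSob 3 0 (X 0 ^ 3 - C 6 * X 0 ^ 2 + C 6 * X 0) ∧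
    IsSob 3 1 (X 0 ^ 2 * X 1 - X 0 ^ 2 - C 3 * (X 0 * X 1) + C 3 * X 0 + X 1) ∧
    -- mutual `∇`-orthogonality of the four listed polynomials
    (∀ P₁ P₂ : MvPolynomial (Fin 2) ℝ,
      P₁ ∈ ({X 0 ^ 2 - C 2 * X 0, X 0 * X 1 - X 0 - X 1,
             X 0 ^ 3 - C 6 * X 0 ^ 2 + C 6 * X 0,
             X 0 ^ 2 * X 1 - X 0 ^ 2 - C 3 * (X 0 * X 1) + C 3 * X 0 + X 1} :
             Set (MvPolynomial (Fin 2) ℝ)) →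
      P₂ ∈ ({X 0 ^ 2 - C 2 * X 0, X 0 * X 1 - X 0 - X 1,
             X 0 ^ 3 - C 6 * X 0 ^ 2 + C 6 * X 0,
             X 0 ^ 2 * X 1 - X 0 ^ 2 - C 3 * (X 0 * X 1) + C 3 * X 0 + X 1} :
             Set (MvPolynomial (Fin 2) ℝ)) →
      P₁ ≠ P₂ → grad00 (pev P₁) (pev P₂) = 0) := by
  refine ⟨?_, isSob_20, isSob_21, isSob_30, isSob_31, ?_⟩
  · rintro n k hk P ⟨hdeg, horth⟩
    constructor
    · have hnk : n - (n - k) = k := by omega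
      rw [hnk]
      have h : rename (Equiv.swap (0 : Fin 2) 1) P - X 0 ^ k * X 1 ^ (n - k)
          = rename (Equiv.swap (0 : Fin 2) 1) (P - X 0 ^ (n - k) * X 1 ^ k) := by
        rw [map_sub, map_mul, map_pow, map_pow, rename_X, rename_X,
          Equiv.swap_apply_left, Equiv.swap_apply_right]
        ring
      rw [h]
      exact lt_of_le_of_lt (totalDegree_rename_le _ _) hdeg
    · intro Q hQ
      rw [grad00_swap]
      exact horth _ (lt_of_le_of_lt (totalDegree_rename_le _ _) hQ)
  · intro P₁ P₂ h1 h2 hne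
    simp only [Set.mem_insert_iff, Set.mem_singleton_iff] at h1 h2
    rcases h1 with rfl | rfl | rfl | rfl <;> rcases h2 with rfl | rfl | rfl | rfl
    · exact absurd rfl hne
    · exact pair_S02_S12
    · exact grad00_comm _ _ ▸ S03_ortho _ (lt_of_le_of_lt deg_S02 (by norm_num))
    · exact grad00_comm _ _ ▸ S13_ortho _ (lt_of_le_of_lt deg_S02 (by norm_num))
    · rw [grad00_comm]; exact pair_S02_S12
    · exact absurd rfl hne
    · exact grad00_comm _ _ ▸ S03_ortho _ (lt_of_le_of_lt deg_S12 (by norm_num))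
    · exact grad00_comm _ _ ▸ S13_ortho _ (lt_of_le_of_lt deg_S12 (by norm_num))
    · exact S03_ortho _ (lt_of_le_of_lt deg_S02 (by norm_num))
    · exact S03_ortho _ (lt_of_le_of_lt deg_S12 (by norm_num))
    · exact absurd rfl hne
    · exact pair_S03_S13
    · exact S13_ortho _ (lt_of_le_of_lt deg_S02 (by norm_num))
    · exact S13_ortho _ (lt_of_le_of_lt deg_S12 (by norm_num))
    · rw [grad00_comm]; exact pair_S03_S13
    · exact absurd rfl hne
end
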